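/- arXiv:1406.0544 — 3 statements merged into one kernel-verified Lean document; each statement's English description precedes it below -/
import Mathlib

section
/- Let (G,P,Δ) be a Garside structure of finite type. Suppose X = X₁·…·X_n is a product of simple elements in right normal form and Y = Y₁·…·Y_m is a product of simple elements in left normal form. If Δ ≼ XY, then Δ ≼ X_n Y₁. -/
/-- A Garside structure `(G, P, Δ)` on a group `G`: `P` is the submonoid of positive
elements, `Δ` the Garside element.  The axioms (G1)-(G4) are stated below:
the prefix relation `a ≼ b ⟺ a⁻¹b ∈ P` is a lattice order (with gcd `wedge` and
lcm `vee`), the simple elements `[1,Δ]` generate `G`, conjugation by `Δ` preserves `P`,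
and every nontrivial positive element has finite letter length. -/
structure GarsideStructure (G : Type*) [Group G] where
  P : Set G
  one_mem : (1 : G) ∈ P
  mul_mem : ∀ {a b : G}, a ∈ P → b ∈ P → a * b ∈ P
  inter_inv : ∀ a : G, a ∈ P → a⁻¹ ∈ P → a = 1
  Δ : G
  Δ_mem : Δ ∈ P
  wedge : G → G → G
  vee : G → G → G
  wedge_le_left : ∀ a b : G, (wedge a b)⁻¹ * a ∈ P
  wedge_le_right : ∀ a b : G, (wedge a b)⁻¹ * b ∈ P
  le_wedge : ∀ a b c : G, c⁻¹ * a ∈ P → c⁻¹ * b ∈ P → c⁻¹ * wedge a b ∈ P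
  le_vee_left : ∀ a b : G, a⁻¹ * vee a b ∈ P
  le_vee_right : ∀ a b : G, b⁻¹ * vee a b ∈ P
  vee_le : ∀ a b c : G, a⁻¹ * c ∈ P → b⁻¹ * c ∈ P → (vee a b)⁻¹ * c ∈ P
  simples_generate : Subgroup.closure {a : G | a ∈ P ∧ a⁻¹ * Δ ∈ P} = ⊤
  conj_mem : ∀ a : G, a ∈ P → Δ⁻¹ * a * Δ ∈ P
  len_bdd : ∀ X : G, X ∈ P → X ≠ 1 →
    BddAbove {k : ℕ | ∃ w : List G, w.length = k ∧ (∀ a ∈ w, a ∈ P ∧ a ≠ 1) ∧ w.prod = X}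

namespace GarsideStructure

variable {G : Type*} [Group G] (S : GarsideStructure G)

/-- The prefix order `a ≼ b`. -/
def le (a b : G) : Prop := a⁻¹ * b ∈ S.P

/-- Strict prefix order `a ≺ b`. -/
def lt (a b : G) : Prop := S.le a b ∧ a ≠ b

/-- The suffix relation `a ≽ b ⟺ ab⁻¹ ∈ P`. -/
def ges (a b : G) : Prop := a * b⁻¹ ∈ S.P

/-- Simple elements: the interval `[1, Δ]`. -/
def IsSimple (a : G) : Prop := a ∈ S.P ∧ S.le a S.Δ

/-- Atoms: elements of `P \ {1}` that are not products of two elements of `P \ {1}`. -/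
def IsAtom' (a : G) : Prop := a ∈ S.P ∧ a ≠ 1 ∧
  ¬ ∃ b c : G, b ∈ S.P ∧ b ≠ 1 ∧ c ∈ S.P ∧ c ≠ 1 ∧ a = b * c

/-- The letter length `‖X‖` of a positive element. -/
noncomputable def norm (X : G) : ℕ :=
  sSup {k : ℕ | ∃ w : List G, w.length = k ∧ (∀ a ∈ w, a ∈ S.P ∧ a ≠ 1) ∧ w.prod = X}

/-- Finite type: finitely many simple elements. -/
def FiniteType : Prop := {a : G | S.IsSimple a}.Finite

/-- Homogeneous: the letter length is additive on `P`. -/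
def Homogeneous : Prop := ∀ X ∈ S.P, ∀ Y ∈ S.P, S.norm (X * Y) = S.norm X + S.norm Y

/-- Symmetric: for simple `u, v`, `u ≼ v ⟺ v ≽ u`. -/
def IsSymmetric : Prop := ∀ u v : G, S.IsSimple u → S.IsSimple v → (S.le u v ↔ S.ges v u)

/-- Square free: no simple element contains the square of an atom. -/
def SquareFree : Prop := ∀ a : G, S.IsSimple a →
  ¬ ∃ U x V : G, U ∈ S.P ∧ S.IsAtom' x ∧ V ∈ S.P ∧ a = U * x ^ 2 * V

/-- The right complement `∂A = A⁻¹Δ`. -/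
def dl (A : G) : G := A⁻¹ * S.Δ

/-- `τ(X) = Δ⁻¹XΔ`. -/
def tau (X : G) : G := S.Δ⁻¹ * X * S.Δ

/-- The product `A·B` of simple elements is left weighted if `A = (AB) ∧ Δ`. -/
def LeftWeighted (A B : G) : Prop := A = S.wedge (A * B) S.Δ

/-- The gcd for the suffix order `≽` (derived from the lcm for `≼`). -/
def rwedge (a b : G) : G := (S.vee a⁻¹ b⁻¹)⁻¹

/-- The product `A·B` of simple elements is right weighted if `B = (AB) ∧̃ Δ`. -/
def RightWeighted (A B : G) : Prop := B = S.rwedge (A * B) S.Δ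

end GarsideStructure
namespace GarsideStructure

variable {G : Type*} [Group G] (S : GarsideStructure G)

private lemma memP_congr {x y : G} (h : x ∈ S.P) (e : y = x) : y ∈ S.P := e ▸ h

lemma prod_mem_P {l : List G} (hl : ∀ a ∈ l, a ∈ S.P) : l.prod ∈ S.P := by
  induction l with
  | nil => simpa using S.one_mem
  | cons a t ih =>
    rw [List.prod_cons]
    exact S.mul_mem (hl a (by simp)) (ih fun b hb => hl b (by simp [hb]))

lemma pow_mem_P (k : ℕ) : S.Δ ^ k ∈ S.P := by
  induction k with
  | zero => simpa using S.one_mem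
  | succ n ih => rw [pow_succ]; exact S.mul_mem ih S.Δ_mem

lemma Δ_simple : S.IsSimple S.Δ := ⟨S.Δ_mem, show S.Δ⁻¹ * S.Δ ∈ S.P by simpa using S.one_mem⟩

/-- products of simples -/
def PS (x : G) : Prop := ∃ l : List G, (∀ a ∈ l, S.IsSimple a) ∧ l.prod = x

lemma PS.memP {x : G} (h : S.PS x) : x ∈ S.P := by
  obtain ⟨l, hl, rfl⟩ := h
  exact S.prod_mem_P fun a ha => (hl a ha).1

lemma PS_one : S.PS 1 := ⟨[], by simp, by simp⟩

lemma PS_simple {x : G} (h : S.IsSimple x) : S.PS x := ⟨[x], by simpa using h, by simp⟩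

lemma PS_mul {x y : G} (hx : S.PS x) (hy : S.PS y) : S.PS (x * y) := by
  obtain ⟨l, hl, rfl⟩ := hx
  obtain ⟨m, hm, rfl⟩ := hy
  refine ⟨l ++ m, ?_, by simp⟩
  intro a ha
  rcases List.mem_append.mp ha with h | h
  exacts [hl a h, hm a h]

lemma PS_Δpow (k : ℕ) : S.PS (S.Δ ^ k) := by
  induction k with
  | zero => simpa using S.PS_one
  | succ n ih => rw [pow_succ]; exact S.PS_mul ih (S.PS_simple S.Δ_simple)

end GarsideStructure

/-- conjugation as a monoid hom -/
def conjHom {G : Type*} [Group G] (g : G) : G →* G where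
  toFun x := g * x * g⁻¹
  map_one' := by group
  map_mul' a b := by group

@[simp] lemma conjHom_apply {G : Type*} [Group G] (g x : G) : conjHom g x = g * x * g⁻¹ := rfl

namespace GarsideStructure

variable {G : Type*} [Group G] (S : GarsideStructure G)

lemma PS_map {f : G →* G} (hf : ∀ a, S.IsSimple a → S.IsSimple (f a)) {x : G} (h : S.PS x) :
    S.PS (f x) := by
  obtain ⟨l, hl, rfl⟩ := h
  refine ⟨l.map f, ?_, List.prod_hom l f⟩
  intro a ha
  obtain ⟨b, hb, rfl⟩ := List.mem_map.mp ha
  exact hf b (hl b hb)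

lemma tau_simple2 {a : G} (h : S.IsSimple a) : S.IsSimple (conjHom S.Δ⁻¹ a) := by
  rw [conjHom_apply, inv_inv]
  refine ⟨S.conj_mem a h.1, ?_⟩
  show (S.Δ⁻¹ * a * S.Δ)⁻¹ * S.Δ ∈ S.P
  exact S.memP_congr (S.conj_mem _ h.2) (by group)

lemma exists_tau_eq (hft : S.FiniteType) {a : G} (h : S.IsSimple a) :
    ∃ b, S.IsSimple b ∧ S.Δ⁻¹ * b * S.Δ = a := by
  have hmaps : Set.MapsTo (conjHom S.Δ⁻¹) {x | S.IsSimple x} {x | S.IsSimple x} :=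
    fun x hx => S.tau_simple2 hx
  have hinj : Set.InjOn (conjHom S.Δ⁻¹) {x | S.IsSimple x} := by
    intro x _ y _ hxy
    simp only [conjHom_apply] at hxy
    exact mul_left_cancel (mul_right_cancel hxy)
  obtain ⟨b, hb1, hb2⟩ :=
    ((Set.Finite.injOn_iff_bijOn_of_mapsTo hft hmaps).mp hinj).surjOn h
  refine ⟨b, hb1, ?_⟩
  rw [← hb2]; simp

lemma sig_simple (hft : S.FiniteType) {a : G} (h : S.IsSimple a) :
    S.IsSimple (S.Δ * a * S.Δ⁻¹) := by
  obtain ⟨b, hb, he⟩ := S.exists_tau_eq hft h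
  have : S.Δ * a * S.Δ⁻¹ = b := by rw [← he]; group
  rw [this]; exact hb

lemma PS_tau {x : G} (h : S.PS x) : S.PS (S.Δ⁻¹ * x * S.Δ) := by
  have := S.PS_map (f := conjHom S.Δ⁻¹) (fun a ha => S.tau_simple2 ha) h
  simpa using this

lemma PS_sig (hft : S.FiniteType) {x : G} (h : S.PS x) : S.PS (S.Δ * x * S.Δ⁻¹) := by
  have := S.PS_map (f := conjHom S.Δ)
    (fun a ha => by simpa using S.sig_simple hft ha) h
  simpa using this

lemma PS_tau_pow (k : ℕ) {x : G} (h : S.PS x) : S.PS (S.Δ⁻¹ ^ k * x * S.Δ ^ k) := by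
  induction k generalizing x with
  | zero => simpa using h
  | succ n ih =>
    have h2 := ih (S.PS_tau h)
    have e : S.Δ⁻¹ ^ (n+1) * x * S.Δ ^ (n+1) = S.Δ⁻¹ ^ n * (S.Δ⁻¹ * x * S.Δ) * S.Δ ^ n := by
      simp only [pow_succ, pow_succ']
      group
    rw [e]; exact h2

lemma PS_sig_pow (hft : S.FiniteType) (k : ℕ) {x : G} (h : S.PS x) :
    S.PS (S.Δ ^ k * x * S.Δ⁻¹ ^ k) := by
  induction k generalizing x with
  | zero => simpa using h
  | succ n ih =>
    have h2 := ih (S.PS_sig hft h)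
    have e : S.Δ ^ (n+1) * x * S.Δ⁻¹ ^ (n+1) = S.Δ ^ n * (S.Δ * x * S.Δ⁻¹) * S.Δ⁻¹ ^ n := by
      simp only [pow_succ, pow_succ']
      group
    rw [e]; exact h2

lemma PS_inv_aux : ∀ (l : List G), (∀ a ∈ l, S.IsSimple a) →
    ∃ q m, S.PS q ∧ l.prod⁻¹ * S.Δ ^ m = q := by
  intro l
  induction l with
  | nil => exact fun _ => ⟨1, 0, S.PS_one, by simp⟩
  | cons a t ih =>
    intro hl
    obtain ⟨q, m, hq, he⟩ := ih fun b hb => hl b (List.mem_cons_of_mem _ hb)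
    have ha := hl a List.mem_cons_self
    have hda : S.IsSimple (a⁻¹ * S.Δ) := by
      refine ⟨ha.2, ?_⟩
      show (a⁻¹ * S.Δ)⁻¹ * S.Δ ∈ S.P
      exact S.memP_congr (S.conj_mem a ha.1) (by group)
    refine ⟨q * (S.Δ⁻¹ ^ m * (a⁻¹ * S.Δ) * S.Δ ^ m), m + 1,
      S.PS_mul hq (S.PS_tau_pow m (S.PS_simple hda)), ?_⟩
    rw [List.prod_cons, ← he]
    simp only [pow_succ, pow_succ']
    group

/-- every element of the group is a product of simples times a power of `Δ⁻¹` -/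
def QQ (x : G) : Prop := ∃ (p : G) (k : ℕ), S.PS p ∧ x * S.Δ ^ k = p

lemma QQ_all (hft : S.FiniteType) (g : G) : S.QQ g := by
  have hg : g ∈ Subgroup.closure {a : G | a ∈ S.P ∧ a⁻¹ * S.Δ ∈ S.P} := by
    rw [S.simples_generate]; exact Subgroup.mem_top g
  induction hg using Subgroup.closure_induction with
  | mem x hx => exact ⟨x, 0, S.PS_simple ⟨hx.1, hx.2⟩, by simp⟩
  | one => exact ⟨1, 0, S.PS_one, by simp⟩
  | mul x y hx hy ihx ihy =>
    obtain ⟨p, k, hp, he⟩ := ihx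
    obtain ⟨q, l, hq, he'⟩ := ihy
    refine ⟨p * (S.Δ⁻¹ ^ k * q * S.Δ ^ k), l + k, S.PS_mul hp (S.PS_tau_pow k hq), ?_⟩
    rw [← he, ← he']
    simp only [pow_add]
    group
  | inv x hx ih =>
    obtain ⟨p, k, hp, he⟩ := ih
    obtain ⟨l, hl, rfl⟩ := hp
    obtain ⟨q, m, hq, he'⟩ := S.PS_inv_aux l hl
    refine ⟨S.Δ ^ k * q * S.Δ⁻¹ ^ k * S.Δ ^ k, m,
      S.PS_mul (S.PS_sig_pow hft k hq) (S.PS_Δpow k), ?_⟩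
    rw [← he', ← he]
    group

end GarsideStructure

namespace GarsideStructure

variable {G : Type*} [Group G] (S : GarsideStructure G)

/-- extraction of a simple prefix from a product of simples -/
lemma prefix_extract_aux : ∀ (l : List G), (∀ b ∈ l, S.IsSimple b) →
    ∀ a, S.IsSimple a → S.le a l.prod → ∃ w, S.PS w ∧ l.prod = a * w := by
  intro l
  induction l with
  | nil =>
    intro _ a ha hle
    have h1 : a⁻¹ ∈ S.P := by
      have h0 : a⁻¹ * List.prod [] ∈ S.P := hle
      simpa using h0
    have : a = 1 := S.inter_inv a ha.1 h1
    exact ⟨1, S.PS_one, by simp [this]⟩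
  | cons t q ih =>
    intro hl a ha hle
    have ht := hl t List.mem_cons_self
    have hqs : ∀ b ∈ q, S.IsSimple b := fun b hb => hl b (List.mem_cons_of_mem _ hb)
    have ha2P : t⁻¹ * S.vee a t ∈ S.P := S.le_vee_right a t
    have hVtΔ : (S.vee a t)⁻¹ * (t * S.Δ) ∈ S.P := by
      apply S.vee_le
      · exact S.memP_congr (S.mul_mem ha.2 (S.conj_mem t ht.1)) (by group)
      · exact S.memP_congr S.Δ_mem (by group)
    have ha2Δ : S.le (t⁻¹ * S.vee a t) S.Δ := S.memP_congr hVtΔ (by group)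
    have ha2le : S.le (t⁻¹ * S.vee a t) q.prod := by
      have h0 : (S.vee a t)⁻¹ * (t * q.prod) ∈ S.P := by
        apply S.vee_le
        · exact S.memP_congr hle (by rw [List.prod_cons])
        · exact S.memP_congr (S.prod_mem_P fun b hb => (hqs b hb).1) (by group)
      exact S.memP_congr h0 (by group)
    obtain ⟨w, hw, hqe⟩ := ih hqs (t⁻¹ * S.vee a t) ⟨ha2P, ha2Δ⟩ ha2le
    have hbP : a⁻¹ * S.vee a t ∈ S.P := S.le_vee_left a t
    have hbΔ : S.le (a⁻¹ * S.vee a t) S.Δ := by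
      have h0 : (S.vee a t)⁻¹ * (a * S.Δ) ∈ S.P := by
        apply S.vee_le
        · exact S.memP_congr S.Δ_mem (by group)
        · exact S.memP_congr (S.mul_mem ht.2 (S.conj_mem a ha.1)) (by group)
      exact S.memP_congr h0 (by group)
    refine ⟨(a⁻¹ * S.vee a t) * w, S.PS_mul (S.PS_simple ⟨hbP, hbΔ⟩) hw, ?_⟩
    rw [List.prod_cons, hqe]
    group

lemma prefix_extract {p : G} (hp : S.PS p) {a : G} (ha : S.IsSimple a) (hle : S.le a p) :
    ∃ w, S.PS w ∧ p = a * w := by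
  obtain ⟨l, hl, rfl⟩ := hp
  exact S.prefix_extract_aux l hl a ha hle

lemma pos_PS_aux (hft : S.FiniteType) {g : G} (hg : g ∈ S.P) :
    ∀ (k : ℕ) (p : G), S.PS p → g * S.Δ ^ k = p → S.PS g := by
  intro k
  induction k with
  | zero =>
    intro p hp he
    rw [pow_zero, mul_one] at he
    rw [he]; exact hp
  | succ n ih =>
    intro p hp he
    have h1 : S.le S.Δ p := by
      show S.Δ⁻¹ * p ∈ S.P
      rw [← he]
      have h2 := S.mul_mem (S.conj_mem g hg) (S.pow_mem_P n)
      exact S.memP_congr h2 (by simp only [pow_succ, pow_succ']; group)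
    obtain ⟨w, hw, hpe⟩ := S.prefix_extract hp S.Δ_simple h1
    apply ih (S.Δ * w * S.Δ⁻¹) (S.PS_sig hft hw)
    calc g * S.Δ ^ n = g * S.Δ ^ (n+1) * S.Δ⁻¹ := by
          simp only [pow_succ]; group
      _ = p * S.Δ⁻¹ := by rw [he]
      _ = S.Δ * w * S.Δ⁻¹ := by rw [hpe]

lemma pos_PS (hft : S.FiniteType) {g : G} (hg : g ∈ S.P) : S.PS g := by
  obtain ⟨p, k, hp, he⟩ := S.QQ_all hft g
  exact S.pos_PS_aux hft hg k p hp he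

/-- two-sided invariance of P under conjugation by Δ, from finite type -/
lemma sig_mem (hft : S.FiniteType) {p : G} (hp : p ∈ S.P) : S.Δ * p * S.Δ⁻¹ ∈ S.P :=
  (S.PS_sig hft (S.pos_PS hft hp)).memP

/-- Key lemma, left version: left-weighted factors absorb. -/
lemma lemL1 {u B C : G} (hu : u ∈ S.P) (hB : B ∈ S.P) (hC : C ∈ S.P)
    (hw : B = S.wedge (B * C) S.Δ) (h : S.le S.Δ (u * B * C)) : S.le S.Δ (u * B) := by
  have hcΔ : (u⁻¹ * S.vee u S.Δ)⁻¹ * S.Δ ∈ S.P := by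
    have h0 : (S.vee u S.Δ)⁻¹ * (u * S.Δ) ∈ S.P :=
      S.vee_le _ _ _ (S.memP_congr S.Δ_mem (by group)) (S.memP_congr (S.conj_mem u hu) (by group))
    exact S.memP_congr h0 (by group)
  have hcBC : (u⁻¹ * S.vee u S.Δ)⁻¹ * (B * C) ∈ S.P := by
    have h0 : (S.vee u S.Δ)⁻¹ * (u * B * C) ∈ S.P :=
      S.vee_le _ _ _ (S.memP_congr (S.mul_mem hB hC) (by group)) h
    exact S.memP_congr h0 (by group)
  have hcB : (u⁻¹ * S.vee u S.Δ)⁻¹ * B ∈ S.P := by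
    rw [hw]
    exact S.le_wedge _ _ _ hcBC hcΔ
  have h2 := S.mul_mem (S.le_vee_right u S.Δ) hcB
  exact S.memP_congr h2 (by group)

/-- Key lemma, right version: right-weighted factors absorb. -/
lemma lemL2 (hft : S.FiniteType) {A B v : G} (hA : A ∈ S.P) (hB : B ∈ S.P) (hv : v ∈ S.P)
    (hw : B = S.rwedge (A * B) S.Δ) (h : S.le S.Δ (A * B * v)) : S.le S.Δ (B * v) := by
  have hwd : (S.wedge S.Δ⁻¹ v⁻¹)⁻¹ * S.Δ⁻¹ ∈ S.P := S.wedge_le_left _ _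
  have lcm : ∀ z : G, z * S.Δ⁻¹ ∈ S.P → z * v⁻¹ ∈ S.P → z * S.wedge S.Δ⁻¹ v⁻¹ ∈ S.P := by
    intro z h1 h2
    have h3 := S.le_wedge S.Δ⁻¹ v⁻¹ z⁻¹ (S.memP_congr h1 (by group)) (S.memP_congr h2 (by group))
    exact S.memP_congr h3 (by group)
  have h1 : (S.Δ * v) * S.wedge S.Δ⁻¹ v⁻¹ ∈ S.P :=
    lcm _ (S.memP_congr (S.sig_mem hft hv) (by group)) (S.memP_congr S.Δ_mem (by group))
  have h2 : (A * B * v) * S.Δ⁻¹ ∈ S.P := S.memP_congr (S.sig_mem hft h) (by group)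
  have h3 : (A * B * v) * v⁻¹ ∈ S.P := S.memP_congr (S.mul_mem hA hB) (by group)
  have h4 := lcm _ h2 h3
  have h5 : ((A * B)⁻¹)⁻¹ * ((S.wedge S.Δ⁻¹ v⁻¹)⁻¹ * v⁻¹)⁻¹ ∈ S.P := S.memP_congr h4 (by group)
  have h6 : (S.Δ⁻¹)⁻¹ * ((S.wedge S.Δ⁻¹ v⁻¹)⁻¹ * v⁻¹)⁻¹ ∈ S.P := S.memP_congr h1 (by group)
  have h7 := S.vee_le (A * B)⁻¹ S.Δ⁻¹ ((S.wedge S.Δ⁻¹ v⁻¹)⁻¹ * v⁻¹)⁻¹ h5 h6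
  have h8 : B * ((S.wedge S.Δ⁻¹ v⁻¹)⁻¹ * v⁻¹)⁻¹ ∈ S.P := by
    rw [hw]; exact h7
  have h9 : (B * v) * S.Δ⁻¹ ∈ S.P := S.memP_congr (S.mul_mem h8 hwd) (by group)
  have h10 := S.conj_mem _ h9
  exact S.memP_congr h10 (by group)

end GarsideStructure

namespace GarsideStructure

variable {G : Type*} [Group G] (S : GarsideStructure G)

lemma lemY : ∀ (l : List G) (y : G), (∀ a ∈ y :: l, S.IsSimple a) →
    List.Chain' S.LeftWeighted (y :: l) → ∀ u ∈ S.P,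
    S.le S.Δ (u * (y :: l).prod) → S.le S.Δ (u * y) := by
  intro l
  induction l using List.reverseRecOn with
  | nil =>
    intro y _ _ u _ h
    simpa using h
  | append_singleton l' c ih =>
    intro y hs hch u hu h
    have hne : (y :: l') ≠ [] := by simp
    have hs' : ∀ a ∈ y :: l', S.IsSimple a := by
      intro a ha
      apply hs
      simp only [List.mem_cons, List.mem_append] at ha ⊢
      tauto
    have hch2 : List.Chain' S.LeftWeighted ((y :: l') ++ [c]) := by simpa using hch
    rw [show List.Chain' S.LeftWeighted ((y :: l') ++ [c]) ↔ _ from List.isChain_append] at hch2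
    obtain ⟨hch1, -, hlast⟩ := hch2
    have hBc : S.LeftWeighted ((y :: l').getLast hne) c :=
      hlast _ (by rw [List.getLast?_eq_getLast_of_ne_nil hne]; rfl) c rfl
    have hdec : (y :: l').dropLast ++ [(y :: l').getLast hne] = y :: l' :=
      List.dropLast_append_getLast hne
    have hdP : (y :: l').dropLast.prod ∈ S.P :=
      S.prod_mem_P fun b hb => (hs' b (List.dropLast_subset _ hb)).1
    have hB := hs' _ (List.getLast_mem hne)
    have hc := hs c (by simp)
    have hpe2 : (y :: l').prod = (y :: l').dropLast.prod * (y :: l').getLast hne := by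
      conv_lhs => rw [← hdec]
      simp
    have h' : S.le S.Δ ((u * (y :: l').dropLast.prod) * ((y :: l').getLast hne) * c) := by
      have e : u * (y :: (l' ++ [c])).prod =
          (u * (y :: l').dropLast.prod) * ((y :: l').getLast hne) * c := by
        rw [show y :: (l' ++ [c]) = (y :: l') ++ [c] from rfl, List.prod_append, hpe2]
        simp only [List.prod_cons, List.prod_nil]
        group
      rwa [e] at h
    have hfin := S.lemL1 (S.mul_mem hu hdP) hB.1 hc.1 hBc h'
    have e2 : (u * (y :: l').dropLast.prod) * ((y :: l').getLast hne) = u * (y :: l').prod := by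
      rw [hpe2]; group
    rw [e2] at hfin
    exact ih y hs' hch1 u hu hfin

lemma lemX (hft : S.FiniteType) : ∀ (l : List G) (hne : l ≠ []), (∀ a ∈ l, S.IsSimple a) →
    List.Chain' S.RightWeighted l → ∀ v ∈ S.P,
    S.le S.Δ (l.prod * v) → S.le S.Δ (l.getLast hne * v) := by
  intro l
  induction l with
  | nil => exact fun hne => absurd rfl hne
  | cons A rest ih =>
    intro hne hs hch v hv h
    cases rest with
    | nil => simpa using h
    | cons Bb rest' =>
      obtain ⟨hAB, hch'⟩ := List.isChain_cons_cons.mp hch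
      have e : (A :: Bb :: rest').prod * v = A * Bb * (rest'.prod * v) := by
        simp only [List.prod_cons]; group
      rw [e] at h
      have hA := hs A (by simp)
      have hBb := hs Bb (by simp)
      have hv' : rest'.prod * v ∈ S.P :=
        S.mul_mem (S.prod_mem_P fun b hb => (hs b (by simp [hb])).1) hv
      have h2 := S.lemL2 hft hA.1 hBb.1 hv' hAB h
      have e2 : Bb * (rest'.prod * v) = (Bb :: rest').prod * v := by
        simp only [List.prod_cons]; group
      rw [e2] at h2
      have h3 := ih (by simp) (fun a ha => hs a (by simp [ha])) hch' v hv h2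
      have e3 : (A :: Bb :: rest').getLast hne = (Bb :: rest').getLast (by simp) :=
        List.getLast_cons _
      rw [e3]
      exact h3

end GarsideStructure

/-- **Lemma 2.4** (Orevkov): if `X = X₁ ⋯ X_n` is a product of simple elements in right
normal form, `Y = Y₁ ⋯ Y_m` is a product of simple elements in left normal form, and
`Δ ≼ XY`, then `Δ ≼ X_n Y₁`. -/
theorem statement5 {G : Type*} [Group G] (S : GarsideStructure G) (hft : S.FiniteType)
    (Xs Ys : List G) (hXne : Xs ≠ []) (hYne : Ys ≠ [])
    (hXsimple : ∀ a ∈ Xs, S.IsSimple a) (hYsimple : ∀ a ∈ Ys, S.IsSimple a)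
    (hXw : List.Chain' S.RightWeighted Xs) (hYw : List.Chain' S.LeftWeighted Ys)
    (h : S.le S.Δ (Xs.prod * Ys.prod)) :
    S.le S.Δ (Xs.getLast hXne * Ys.head hYne) := by
  cases Ys with
  | nil => exact absurd rfl hYne
  | cons y ys =>
    have hXP : Xs.prod ∈ S.P := S.prod_mem_P fun a ha => (hXsimple a ha).1
    have h2 := S.lemY ys y hYsimple hYw Xs.prod hXP h
    have hy : y ∈ S.P := (hYsimple y (by simp)).1
    have h3 := S.lemX hft Xs hXne hXsimple hXw y hy h2
    exact h3
end

section
/- Let (G,P,Δ) be a Garside structure of finite type. Suppose X = A₁·A₂·…·A_r is a product of simple elements in left normal form, let t₀ be a simple element, and suppose that A_j is an atom for some j < r. Then the final factor of the left normal form of t₀X equals A_r, i.e. φ(t₀X) = A_r. -/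
/-- A Garside structure together with the (unique) left normal form of each element:
`X = Δ^(nfInf X) · (nfWord X)`, where the factors of `nfWord X` are simple elements
different from `1` and `Δ` and each consecutive pair is left weighted. -/
structure GarsideStructureNF (G : Type*) [Group G] extends GarsideStructure G where
  nfInf : G → ℤ
  nfWord : G → List G
  nf_factors : ∀ X : G, ∀ a ∈ nfWord X,
    toGarsideStructure.IsSimple a ∧ a ≠ 1 ∧ a ≠ Δ
  nf_chain : ∀ X : G, List.Chain' toGarsideStructure.LeftWeighted (nfWord X)
  nf_prod : ∀ X : G, X = Δ ^ nfInf X * (nfWord X).prod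
  nf_unique : ∀ (X : G) (p : ℤ) (w : List G),
    (∀ a ∈ w, toGarsideStructure.IsSimple a ∧ a ≠ 1 ∧ a ≠ Δ) →
    List.Chain' toGarsideStructure.LeftWeighted w →
    X = Δ ^ p * w.prod → p = nfInf X ∧ w = nfWord X

namespace GarsideStructureNF

variable {G : Type*} [Group G] (S : GarsideStructureNF G)

/-- The infimum `inf X` of `X`: the power of `Δ` in the left normal form. -/
def inf (X : G) : ℤ := S.nfInf X

/-- The canonical length `ℓ(X)`. -/
def ell (X : G) : ℕ := (S.nfWord X).length

/-- The initial factor `ι(X) = τ^{-p}(A₁)`. -/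
def iota (X : G) : G := S.Δ ^ S.nfInf X * (S.nfWord X).headD 1 * S.Δ ^ (-S.nfInf X)

/-- The final factor `φ(X) = A_r`. -/
def phi (X : G) : G := (S.nfWord X).getLastD 1

/-- The preferred prefix `𝔭(X) = ι(X) ∧ ∂(φ(X))`. -/
def pp (X : G) : G := S.wedge (S.iota X) ((S.phi X)⁻¹ * S.Δ)

/-- Cyclic sliding `𝔰(X) = 𝔭(X)⁻¹ X 𝔭(X)` (and `𝔰(X) = X` when `ℓ(X) = 0`). -/
def sliding (X : G) : G := if S.ell X = 0 then X else (S.pp X)⁻¹ * X * S.pp X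

/-- Cycling `c(X) = ι(X)⁻¹ X ι(X)` (and `c(X) = X` when `ℓ(X) = 0`). -/
def cycling (X : G) : G := if S.ell X = 0 then X else (S.iota X)⁻¹ * X * S.iota X

/-- Decycling `d(X) = φ(X) X φ(X)⁻¹` (and `d(X) = X` when `ℓ(X) = 0`). -/
def decycling (X : G) : G := if S.ell X = 0 then X else S.phi X * X * (S.phi X)⁻¹

/-- The set of sliding circuits `SC(X) = {Y ∈ X^G | 𝔰^m(Y) = Y for some m > 0}`. -/
def SC (X : G) : Set G := {Y : G | IsConj X Y ∧ ∃ m : ℕ, 0 < m ∧ S.sliding^[m] Y = Y}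

/-- `s` is an SC-minimal conjugator for `X`. -/
def SCMinConj (X s : G) : Prop :=
  s ∈ S.P ∧ s ≠ 1 ∧ s⁻¹ * X * s ∈ S.SC X ∧
  ∀ t : G, S.lt 1 t → S.lt t s → t⁻¹ * X * t ∉ S.SC X

/-- The summit infimum `inf_s X = max {inf Y | Y ∈ X^G}`. -/
noncomputable def infS (X : G) : ℤ := sSup {p : ℤ | ∃ Y : G, IsConj X Y ∧ p = S.nfInf Y}

/-- The summit length `ℓ_s(X) = min {ℓ(Y) | Y ∈ X^G}`. -/
noncomputable def ellS (X : G) : ℕ := sInf {r : ℕ | ∃ Y : G, IsConj X Y ∧ r = S.ell Y}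

end GarsideStructureNF
section Aux

namespace GarsideStructure

variable {G : Type*} [Group G] (S : GarsideStructure G)

lemma le_refl' (a : G) : S.le a a := by simp [le, S.one_mem]

lemma le_trans' {a b c : G} (h1 : S.le a b) (h2 : S.le b c) : S.le a c := by
  have := S.mul_mem h1 h2
  simpa [le, mul_assoc] using this

lemma le_antisymm' {a b : G} (h1 : S.le a b) (h2 : S.le b a) : a = b := by
  have h : a⁻¹ * b = 1 := S.inter_inv _ h1 (by simpa [le, mul_inv_rev] using h2)
  have := congrArg (a * ·) h
  simpa [mul_assoc] using this.symm

lemma le_mul_iff (c a b : G) : S.le (c * a) (c * b) ↔ S.le a b := by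
  simp [le, mul_assoc]

lemma one_le_iff {a : G} : S.le 1 a ↔ a ∈ S.P := by simp [le]

lemma le_one_eq {a : G} (ha : a ∈ S.P) (h : S.le a 1) : a = 1 :=
  S.le_antisymm' h (S.one_le_iff.2 ha)

lemma wedge_le_l (a b : G) : S.le (S.wedge a b) a := S.wedge_le_left a b

lemma wedge_le_r (a b : G) : S.le (S.wedge a b) b := S.wedge_le_right a b

lemma le_wedge' {a b c : G} (h1 : S.le c a) (h2 : S.le c b) :
    S.le c (S.wedge a b) := S.le_wedge a b c h1 h2

lemma wedge_mem {a b : G} (ha : a ∈ S.P) (hb : b ∈ S.P) : S.wedge a b ∈ S.P :=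
  S.one_le_iff.1 (S.le_wedge' (S.one_le_iff.2 ha) (S.one_le_iff.2 hb))

lemma wedge_eq_left {a b : G} (h : S.le a b) : S.wedge a b = a :=
  S.le_antisymm' (S.wedge_le_l a b) (S.le_wedge' (S.le_refl' a) h)

lemma mul_wedge (c a b : G) : c * S.wedge a b = S.wedge (c * a) (c * b) := by
  apply S.le_antisymm'
  · exact S.le_wedge' (by rw [S.le_mul_iff]; exact S.wedge_le_l a b)
      (by rw [S.le_mul_iff]; exact S.wedge_le_r a b)
  · have h1 : S.le (c * (c⁻¹ * S.wedge (c * a) (c * b))) (c * a) := by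
      simpa [mul_assoc] using S.wedge_le_l (c * a) (c * b)
    have h2 : S.le (c * (c⁻¹ * S.wedge (c * a) (c * b))) (c * b) := by
      simpa [mul_assoc] using S.wedge_le_r (c * a) (c * b)
    rw [S.le_mul_iff] at h1 h2
    have := S.le_wedge' h1 h2
    rw [← S.le_mul_iff c] at this
    simpa [mul_assoc] using this

lemma wedge_wedge {a b c : G} (h : S.le b c) :
    S.wedge a b = S.wedge (S.wedge a c) b := by
  apply S.le_antisymm'
  · exact S.le_wedge' (S.le_wedge' (S.wedge_le_l a b)
      (S.le_trans' (S.wedge_le_r a b) h)) (S.wedge_le_r a b)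
  · exact S.le_wedge' (S.le_trans' (S.wedge_le_l _ b) (S.wedge_le_l a c))
      (S.wedge_le_r _ b)

lemma le_Delta_mul {a : G} (ha : a ∈ S.P) : S.le S.Δ (a * S.Δ) := by
  have := S.conj_mem a ha
  simpa [le, mul_assoc] using this

lemma simple_one : S.IsSimple (1 : G) :=
  ⟨S.one_mem, by simpa [le] using S.Δ_mem⟩

-- t ≼ B := (t*A) ∧ Δ
lemma step_le_B {t : G} (A : G) (ht : S.IsSimple t) (hA : A ∈ S.P) :
    S.le t (S.wedge (t * A) S.Δ) :=
  S.le_wedge' (by simpa [le, mul_assoc] using hA) ht.2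

lemma step_B_simple {t A : G} (ht : S.IsSimple t) (hA : A ∈ S.P) :
    S.IsSimple (S.wedge (t * A) S.Δ) :=
  ⟨S.wedge_mem (S.mul_mem ht.1 hA) S.Δ_mem, S.wedge_le_r _ _⟩

lemma step_t'_mem (t A : G) : (S.wedge (t * A) S.Δ)⁻¹ * (t * A) ∈ S.P :=
  S.wedge_le_left _ _

lemma step_t'_simple {t A : G} (ht : S.IsSimple t) (hA : S.IsSimple A) :
    S.IsSimple ((S.wedge (t * A) S.Δ)⁻¹ * (t * A)) := by
  refine ⟨S.step_t'_mem t A, ?_⟩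
  set B := S.wedge (t * A) S.Δ with hB
  have hc : t⁻¹ * B ∈ S.P := S.step_le_B A ht hA.1
  have h1 : A⁻¹ * S.Δ ∈ S.P := hA.2
  have h2 : S.Δ⁻¹ * (t⁻¹ * B) * S.Δ ∈ S.P := S.conj_mem _ hc
  have := S.mul_mem h1 h2
  have heq : A⁻¹ * S.Δ * (S.Δ⁻¹ * (t⁻¹ * B) * S.Δ) = ((B⁻¹ * (t * A))⁻¹ * S.Δ) := by
    group
  rw [heq] at this
  exact this

lemma step_decomp (t A : G) :
    A = (t⁻¹ * S.wedge (t * A) S.Δ) * ((S.wedge (t * A) S.Δ)⁻¹ * (t * A)) := by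
  group

lemma step_B_ne_one {t A : G} (ht : S.IsSimple t) (hA : S.IsSimple A) (hA1 : A ≠ 1) :
    S.wedge (t * A) S.Δ ≠ 1 := by
  intro h
  have hle : S.le t 1 := h ▸ S.step_le_B A ht hA.1
  have ht1 : t = 1 := S.le_one_eq ht.1 hle
  apply hA1
  have : S.wedge A S.Δ = A := S.wedge_eq_left hA.2
  rw [ht1, one_mul, this] at h
  exact h

lemma key_wedge {t A A' : G} (ht : S.IsSimple t) (hAA' : S.LeftWeighted A A') :
    S.wedge (t * A * A') S.Δ = S.wedge (t * A) S.Δ := by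
  have htD : S.le (t⁻¹ * S.Δ) S.Δ := by
    have := S.conj_mem t ht.1
    simpa [le, mul_inv_rev, mul_assoc] using this
  have h1 : S.wedge (t * A * A') S.Δ = S.wedge (t * (A * A')) (t * (t⁻¹ * S.Δ)) := by
    rw [mul_assoc]
    congr 1
    group
  rw [h1, ← S.mul_wedge, S.wedge_wedge htD, ← hAA', S.mul_wedge]
  congr 1
  group

lemma domino {t A A' : G} (ht : S.IsSimple t) (hA : S.IsSimple A) (hA' : S.IsSimple A')
    (hAA' : S.LeftWeighted A A') :
    S.LeftWeighted (S.wedge (t * A) S.Δ)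
      (S.wedge (((S.wedge (t * A) S.Δ)⁻¹ * (t * A)) * A') S.Δ) := by
  set B := S.wedge (t * A) S.Δ with hBdef
  set t' := B⁻¹ * (t * A) with ht'def
  set B' := S.wedge (t' * A') S.Δ with hB'def
  have ht' : S.IsSimple t' := S.step_t'_simple ht hA
  have hB'P : B' ∈ S.P := (S.step_B_simple ht' hA'.1).1
  have hBs : S.IsSimple B := S.step_B_simple ht hA.1
  unfold LeftWeighted
  apply S.le_antisymm'
  · exact S.le_wedge' (by simpa [le, mul_assoc] using hB'P) hBs.2
  · have hx : S.le (B * B') (t * A * A') := by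
      have h := S.wedge_le_left (t' * A') S.Δ
      have heq : (B * B')⁻¹ * (t * A * A') = B'⁻¹ * (t' * A') := by
        rw [ht'def]; group
      rw [le, heq]
      exact h
    have h2 : S.le (S.wedge (B * B') S.Δ) (t * A * A') :=
      S.le_trans' (S.wedge_le_l _ _) hx
    have h3 := S.le_wedge' h2 (S.wedge_le_r (B * B') S.Δ)
    rwa [S.key_wedge ht hAA'] at h3

lemma LW_base (t A : G) :
    S.LeftWeighted (S.wedge (t * A) S.Δ) ((S.wedge (t * A) S.Δ)⁻¹ * (t * A)) := by
  unfold LeftWeighted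
  congr 1
  group

lemma LW_one_right {A : G} (hA : S.IsSimple A) : S.LeftWeighted A 1 := by
  unfold LeftWeighted
  rw [mul_one, S.wedge_eq_left hA.2]

lemma LW_Delta_right {A : G} (hA : S.IsSimple A) (h : S.LeftWeighted A S.Δ) :
    A = S.Δ := by
  apply S.le_antisymm' hA.2
  rw [h]
  exact S.le_wedge' (S.le_Delta_mul hA.1) (S.le_refl' _)

/-- The list of factors obtained when pushing a simple element `t` through a
left normal word from the left. -/
def pushWord (S : GarsideStructure G) : List G → G → List G
  | [], _ => []
  | A :: v, t => S.wedge (t * A) S.Δ :: pushWord S v ((S.wedge (t * A) S.Δ)⁻¹ * (t * A))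

/-- The remainder when pushing a simple element `t` through a word. -/
def pushRem (S : GarsideStructure G) : List G → G → G
  | [], t => t
  | A :: v, t => pushRem S v ((S.wedge (t * A) S.Δ)⁻¹ * (t * A))

lemma push_prod (v : List G) : ∀ t : G,
    (S.pushWord v t).prod * S.pushRem v t = t * v.prod := by
  induction v with
  | nil => intro t; simp [pushWord, pushRem]
  | cons A v ih =>
    intro t
    simp only [pushWord, pushRem, List.prod_cons, mul_assoc, ih]
    group

lemma push_rem_simple (v : List G) (hv : ∀ a ∈ v, S.IsSimple a) :
    ∀ t : G, S.IsSimple t → S.IsSimple (S.pushRem v t) := by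
  induction v with
  | nil => intro t ht; exact ht
  | cons A v ih =>
    intro t ht
    exact ih (fun a ha => hv a (List.mem_cons_of_mem _ ha))
      _ (S.step_t'_simple ht (hv A (List.mem_cons_self)))

lemma push_word_facts (v : List G) (hv : ∀ a ∈ v, S.IsSimple a ∧ a ≠ 1) :
    ∀ t : G, S.IsSimple t → ∀ b ∈ S.pushWord v t, S.IsSimple b ∧ b ≠ 1 := by
  induction v with
  | nil => intro t _ b hb; simp [pushWord] at hb
  | cons A v ih =>
    intro t ht b hb
    have hA := hv A (List.mem_cons_self)
    rcases List.mem_cons.1 hb with h | h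
    · subst h
      exact ⟨S.step_B_simple ht hA.1.1, S.step_B_ne_one ht hA.1 hA.2⟩
    · exact ih (fun a ha => hv a (List.mem_cons_of_mem _ ha)) _
        (S.step_t'_simple ht hA.1) b h

lemma push_word_cons (A : G) (v : List G) (t : G) :
    S.pushWord (A :: v) t =
      S.wedge (t * A) S.Δ :: S.pushWord v ((S.wedge (t * A) S.Δ)⁻¹ * (t * A)) := rfl

lemma push_rem_cons (A : G) (v : List G) (t : G) :
    S.pushRem (A :: v) t = S.pushRem v ((S.wedge (t * A) S.Δ)⁻¹ * (t * A)) := rfl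

lemma push_chain (v : List G) (hv : ∀ a ∈ v, S.IsSimple a)
    (hch : List.Chain' S.LeftWeighted v) :
    ∀ t : G, S.IsSimple t →
      List.Chain' S.LeftWeighted (S.pushWord v t ++ [S.pushRem v t]) := by
  induction v with
  | nil => intro t _; simp [pushWord, pushRem]; exact List.isChain_singleton _
  | cons A v ih =>
    intro t ht
    have hA := hv A (List.mem_cons_self)
    have ht' := S.step_t'_simple ht hA
    have htail := ih (fun a ha => hv a (List.mem_cons_of_mem _ ha))
      (List.IsChain.tail hch) _ ht'
    cases v with
    | nil =>
      simp only [pushWord, pushRem, List.nil_append, List.cons_append]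
      exact List.isChain_pair.2 (S.LW_base t A)
    | cons A' v' =>
      have hAA' : S.LeftWeighted A A' := (List.isChain_cons_cons.1 hch).1
      have hA' := hv A' (List.mem_cons_of_mem _ (List.mem_cons_self))
      simp only [pushWord, pushRem, List.cons_append] at htail ⊢
      exact List.isChain_cons_cons.2 ⟨S.domino ht hA hA' hAA', htail⟩

lemma push_one (v : List G) (hv : ∀ a ∈ v, S.IsSimple a) :
    S.pushWord v 1 = v ∧ S.pushRem v 1 = 1 := by
  induction v with
  | nil => exact ⟨rfl, rfl⟩
  | cons A v ih =>
    have hA := hv A (List.mem_cons_self)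
    have hB : S.wedge (1 * A) S.Δ = A := by rw [one_mul, S.wedge_eq_left hA.2]
    have ht' : (S.wedge (1 * A) S.Δ)⁻¹ * (1 * A) = 1 := by rw [hB]; group
    have := ih (fun a ha => hv a (List.mem_cons_of_mem _ ha))
    constructor
    · rw [push_word_cons, ht', hB, this.1]
    · show S.pushRem v _ = 1
      rw [ht', this.2]

lemma push_self (v : List G) : ∀ A : G, (∀ a ∈ A :: v, S.IsSimple a) →
    List.Chain' S.LeftWeighted (A :: v) → S.pushRem v A = v.getLastD A := by
  induction v with
  | nil => intro A _ _; rfl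
  | cons A' v ih =>
    intro A hall hch
    have hAA' : S.LeftWeighted A A' := (List.isChain_cons_cons.1 hch).1
    have hB : S.wedge (A * A') S.Δ = A := hAA'.symm
    have ht' : (S.wedge (A * A') S.Δ)⁻¹ * (A * A') = A' := by rw [hB]; group
    show S.pushRem v _ = _
    rw [ht', List.getLastD_cons]
    exact ih A' (fun a ha => hall a (List.mem_cons_of_mem _ ha)) hch.tail

lemma push_word_append (u : List G) : ∀ (v : List G) (t : G),
    S.pushWord (u ++ v) t = S.pushWord u t ++ S.pushWord v (S.pushRem u t) := by
  induction u with
  | nil => intro v t; simp [pushWord, pushRem]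
  | cons A u ih =>
    intro v t
    simp only [List.cons_append, push_word_cons, pushRem, ih]

lemma push_rem_append (u : List G) : ∀ (v : List G) (t : G),
    S.pushRem (u ++ v) t = S.pushRem v (S.pushRem u t) := by
  induction u with
  | nil => intro v t; rfl
  | cons A u ih =>
    intro v t
    show S.pushRem (u ++ v) _ = _
    rw [ih]
    rfl

lemma no_Delta (l : List G) : ∀ a : G, (∀ b ∈ a :: l, S.IsSimple b) →
    List.Chain' S.LeftWeighted (a :: l) → a ≠ S.Δ → ∀ b ∈ a :: l, b ≠ S.Δ := by
  induction l with
  | nil =>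
    intro a _ _ haD b hb
    rcases List.mem_cons.1 hb with h | h
    · exact h ▸ haD
    · simp at h
  | cons a' l ih =>
    intro a hall hch haD b hb
    have ha'D : a' ≠ S.Δ := by
      intro h
      exact haD (S.LW_Delta_right (hall a (List.mem_cons_self))
        (h ▸ (List.isChain_cons_cons.1 hch).1))
    rcases List.mem_cons.1 hb with h | h
    · exact h ▸ haD
    · exact ih a' (fun b hb => hall b (List.mem_cons_of_mem _ hb)) hch.tail ha'D b h

lemma getLastD_default_irrel (l : List G) (d d' : G) (h : l ≠ []) :
    l.getLastD d = l.getLastD d' := by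
  rw [List.getLastD_eq_getLast?, List.getLastD_eq_getLast?, List.getLast?_eq_getLast h]
  rfl

lemma getLastD_mem' (l : List G) : ∀ d : G, l ≠ [] → l.getLastD d ∈ l := by
  induction l with
  | nil => intro d h; exact absurd rfl h
  | cons a l ih =>
    intro d _
    simp only [List.getLastD_cons]
    rcases List.eq_nil_or_concat l with h | _
    · subst h; simp
    · exact List.mem_cons_of_mem _ (ih a (by rintro rfl; simp_all))

lemma getLastD_append' (u : List G) : ∀ (v : List G) (d : G), v ≠ [] →
    (u ++ v).getLastD d = v.getLastD d := by
  induction u with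
  | nil => intro v d _; rfl
  | cons a u ih =>
    intro v d hv
    simp only [List.cons_append, List.getLastD_cons]
    rw [ih v a hv]
    exact getLastD_default_irrel v a d hv

lemma strip_Delta (l : List G) (hch : List.Chain' S.LeftWeighted l)
    (hl : ∀ a ∈ l, S.IsSimple a ∧ a ≠ 1)
    (hlast : l ≠ [] → l.getLastD 1 ≠ S.Δ) :
    ∃ (k : ℕ) (l' : List G), l.prod = S.Δ ^ k * l'.prod ∧
      List.Chain' S.LeftWeighted l' ∧
      (∀ a ∈ l', S.IsSimple a ∧ a ≠ 1 ∧ a ≠ S.Δ) ∧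
      l'.getLastD 1 = l.getLastD 1 := by
  induction l with
  | nil => exact ⟨0, [], by simp, List.IsChain.nil, by simp, rfl⟩
  | cons a l ih =>
    by_cases haD : a = S.Δ
    · subst haD
      have hlne : l ≠ [] := by
        rintro rfl
        exact hlast (by simp) (by simp)
      have hlast' : l ≠ [] → l.getLastD 1 ≠ S.Δ := by
        intro _
        have := hlast (by simp)
        rwa [List.getLastD_cons, getLastD_default_irrel l S.Δ 1 hlne] at this
      obtain ⟨k, l', h1, h2, h3, h4⟩ := ih hch.tail
        (fun b hb => hl b (List.mem_cons_of_mem _ hb)) hlast'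
      refine ⟨k + 1, l', ?_, h2, h3, ?_⟩
      · rw [List.prod_cons, h1, pow_succ']
        group
      · rw [h4, List.getLastD_cons, getLastD_default_irrel l S.Δ 1 hlne]
    · have hnD : ∀ b ∈ a :: l, b ≠ S.Δ :=
        S.no_Delta l a (fun b hb => (hl b hb).1) hch haD
      exact ⟨0, a :: l, by simp, hch,
        fun b hb => ⟨(hl b hb).1, (hl b hb).2, hnD b hb⟩, rfl⟩

lemma main_push (u v : List G) (A t₀ : G)
    (hw1 : ∀ a ∈ u ++ A :: v, S.IsSimple a ∧ a ≠ 1)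
    (hchain : List.Chain' S.LeftWeighted (u ++ A :: v)) (ht₀ : S.IsSimple t₀)
    (hatom : S.IsAtom' A) (hvne : v ≠ []) :
    (S.pushRem (u ++ A :: v) t₀ = 1 ∧
      (S.pushWord (u ++ A :: v) t₀).getLastD 1 = (u ++ A :: v).getLastD 1)
    ∨ (S.pushRem (u ++ A :: v) t₀ = (u ++ A :: v).getLastD 1 ∧
        S.pushRem (u ++ A :: v) t₀ ≠ 1) := by
  have hus : ∀ a ∈ u, S.IsSimple a := fun a ha => (hw1 a (List.mem_append_left _ ha)).1
  have hAs : S.IsSimple A := (hw1 A (by simp)).1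
  have hvs : ∀ a ∈ A :: v, S.IsSimple a :=
    fun a ha => (hw1 a (List.mem_append_right _ ha)).1
  have hchAv : List.Chain' S.LeftWeighted (A :: v) := hchain.suffix ⟨u, rfl⟩
  set t₁ := S.pushRem u t₀ with ht₁
  have ht₁s : S.IsSimple t₁ := S.push_rem_simple u hus t₀ ht₀
  have hdec : A = (t₁⁻¹ * S.wedge (t₁ * A) S.Δ) *
      ((S.wedge (t₁ * A) S.Δ)⁻¹ * (t₁ * A)) := S.step_decomp t₁ A
  have hcase : t₁⁻¹ * S.wedge (t₁ * A) S.Δ = 1 ∨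
      (S.wedge (t₁ * A) S.Δ)⁻¹ * (t₁ * A) = 1 := by
    by_contra hcon
    push_neg at hcon
    exact hatom.2.2 ⟨_, _, S.step_le_B A ht₁s hAs.1, hcon.1,
      S.step_t'_mem t₁ A, hcon.2, hdec⟩
  have hrem : S.pushRem (u ++ A :: v) t₀ =
      S.pushRem v ((S.wedge (t₁ * A) S.Δ)⁻¹ * (t₁ * A)) := by
    rw [S.push_rem_append, ← ht₁, S.push_rem_cons]
  rcases hcase with hc | ht2
  · have hBt : S.wedge (t₁ * A) S.Δ = t₁ := by
      have h := congrArg (fun x => t₁ * x) hc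
      simpa [mul_assoc] using h
    have ht₂A : (S.wedge (t₁ * A) S.Δ)⁻¹ * (t₁ * A) = A := by rw [hBt]; group
    have hremA : S.pushRem (u ++ A :: v) t₀ = v.getLastD A := by
      rw [hrem, ht₂A, S.push_self v A hvs hchAv]
    right
    constructor
    · rw [hremA, getLastD_append' u (A :: v) 1 (by simp), List.getLastD_cons,
        getLastD_default_irrel v A 1 hvne]
    · rw [hremA]
      exact (hw1 _ (List.mem_append_right _
        (List.mem_cons_of_mem _ (getLastD_mem' v A hvne)))).2
  · left
    have hrem1 : S.pushRem (u ++ A :: v) t₀ = 1 := by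
      rw [hrem, ht2,
        (S.push_one v (fun a ha => hvs a (List.mem_cons_of_mem _ ha))).2]
    refine ⟨hrem1, ?_⟩
    have hword : S.pushWord (u ++ A :: v) t₀ =
        S.pushWord u t₀ ++ S.wedge (t₁ * A) S.Δ :: v := by
      rw [S.push_word_append, ← ht₁, S.push_word_cons, ht2,
        (S.push_one v (fun a ha => hvs a (List.mem_cons_of_mem _ ha))).1]
    rw [hword, getLastD_append' _ _ 1 (by simp), List.getLastD_cons,
      getLastD_append' u (A :: v) 1 (by simp), List.getLastD_cons,
      getLastD_default_irrel v _ A hvne]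

end GarsideStructure

end Aux
/-- **Corollary 2.7** (Orevkov): if `X = A₁ ⋯ A_r` is in left normal form, `t₀` is a
simple element, and `A_j` is an atom for some `j < r`, then `φ(t₀X) = A_r`. -/
theorem statement6 {G : Type*} [Group G] (S : GarsideStructureNF G) (hft : S.FiniteType)
    (w : List G) (hw : ∀ a ∈ w, S.IsSimple a ∧ a ≠ 1 ∧ a ≠ S.Δ)
    (hchain : List.Chain' S.LeftWeighted w)
    (t₀ : G) (ht₀ : S.IsSimple t₀)
    (j : ℕ) (hj : j + 1 < w.length) (hatom : S.IsAtom' (w.getD j 1)) :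
    S.phi (t₀ * w.prod) = w.getLastD 1 := by
  have hj' : j < w.length := Nat.lt_of_succ_lt hj
  have hsplit : w = w.take j ++ w.getD j 1 :: w.drop (j + 1) := by
    conv_lhs => rw [← List.take_append_drop j w]
    rw [List.drop_eq_getElem_cons hj', List.getD_eq_getElem w 1 hj']
  have hvne : w.drop (j + 1) ≠ [] := by
    have hlen : 0 < (w.drop (j + 1)).length := by
      rw [List.length_drop]; omega
    exact List.ne_nil_of_length_pos hlen
  have hwne : w ≠ [] := by
    intro h; rw [h] at hj'; simp at hj'
  set g := S.toGarsideStructure with hgdef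
  have hws : ∀ a ∈ w, g.IsSimple a := fun a ha => (hw a ha).1
  have hws1 : ∀ a ∈ w, g.IsSimple a ∧ a ≠ 1 :=
    fun a ha => ⟨(hw a ha).1, (hw a ha).2.1⟩
  have hprod : (g.pushWord w t₀).prod * g.pushRem w t₀ = t₀ * w.prod :=
    g.push_prod w t₀
  have hchainbs : List.Chain' g.LeftWeighted (g.pushWord w t₀ ++ [g.pushRem w t₀]) :=
    g.push_chain w hws hchain t₀ ht₀
  have hbs : ∀ b ∈ g.pushWord w t₀, g.IsSimple b ∧ b ≠ 1 :=
    g.push_word_facts w hws1 t₀ ht₀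
  have hrs : g.IsSimple (g.pushRem w t₀) := g.push_rem_simple w hws t₀ ht₀
  have hmp := g.main_push (w.take j) (w.drop (j + 1)) (w.getD j 1) t₀
    (hsplit ▸ hws1) (hsplit ▸ hchain) ht₀ hatom hvne
  rw [← hsplit] at hmp
  have hlastw_ne : w.getLastD 1 ≠ g.Δ :=
    (hw _ (GarsideStructure.getLastD_mem' w 1 hwne)).2.2
  -- produce a candidate list
  have hcand : ∃ l : List G, List.Chain' g.LeftWeighted l ∧
      (∀ a ∈ l, g.IsSimple a ∧ a ≠ 1) ∧ l.prod = t₀ * w.prod ∧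
      l.getLastD 1 = w.getLastD 1 := by
    rcases hmp with ⟨h1, h2⟩ | ⟨h1, h2⟩
    · refine ⟨g.pushWord w t₀, hchainbs.prefix (List.prefix_append _ _), hbs, ?_, h2⟩
      rw [← hprod, h1, mul_one]
    · refine ⟨g.pushWord w t₀ ++ [g.pushRem w t₀], hchainbs, ?_, ?_, ?_⟩
      · intro a ha
        rcases List.mem_append.1 ha with h | h
        · exact hbs a h
        · simp only [List.mem_singleton] at h
          subst h; exact ⟨hrs, h2⟩
      · rw [List.prod_append, List.prod_singleton, hprod]
      · rw [GarsideStructure.getLastD_append' _ _ 1 (by simp), List.getLastD_cons,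
          List.getLastD_nil, h1]
  obtain ⟨l, hlch, hlfac, hlprod, hllast⟩ := hcand
  obtain ⟨k, l', hp', hch', hfac', hlast'⟩ := g.strip_Delta l hlch hlfac
    (fun _ => by rw [hllast]; exact hlastw_ne)
  have hXeq : t₀ * w.prod = g.Δ ^ (k : ℤ) * l'.prod := by
    rw [← hlprod, hp', zpow_natCast]
  obtain ⟨-, hword⟩ := S.nf_unique (t₀ * w.prod) (k : ℤ) l' hfac' hch' hXeq
  show (S.nfWord (t₀ * w.prod)).getLastD 1 = w.getLastD 1
  rw [← hword, hlast', hllast]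
end

section
/- Let (G,P,δ) be a symmetric homogeneous Garside structure of finite type with set of atoms 𝒜; if max(k,l) ≥ 2 assume in addition that the structure is square free. Fix atoms x,y and integers k,l ≥ 1. If X ∈ 𝒬_min(X) and len_𝒬(X) > 0, then the left normal form of X is δ^{-n}·A_n·…·A₁·x₁^k·B₁·…·B_n·y₁^l, where n = len_𝒬(X), x₁ ∈ x^G ∩ 𝒜, y₁ ∈ y^G ∩ 𝒜, and A_i, B_i are simple elements satisfying A_i δ^{i-1} B_i = δ^i for i = 1,…,n. -/
/-- The set `𝒬_m = {P⁻¹ x₁^k P y₁^l | ℓ(P) ≤ m, x₁ ∈ x^G ∩ 𝒜, y₁ ∈ y^G ∩ 𝒜}`. -/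
def Qset {G : Type*} [Group G] (S : GarsideStructureNF G) (x y : G) (k l : ℕ)
    (m : ℕ) : Set G :=
  {Z : G | ∃ Pp x₁ y₁ : G, S.ell Pp ≤ m ∧
    S.IsAtom' x₁ ∧ IsConj x x₁ ∧ S.IsAtom' y₁ ∧ IsConj y y₁ ∧
    Z = Pp⁻¹ * x₁ ^ k * Pp * y₁ ^ l}

/-- `len_𝒬(X) = min {m | 𝒬_m ∩ X^G ≠ ∅}`. -/
noncomputable def lenQ {G : Type*} [Group G] (S : GarsideStructureNF G) (x y : G)
    (k l : ℕ) (X : G) : ℕ :=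
  sInf {m : ℕ | ∃ Z ∈ Qset S x y k l m, IsConj X Z}

/-- `𝒬_min(X) = 𝒬_n ∩ X^G` where `n = len_𝒬(X)`. -/
noncomputable def Qmin {G : Type*} [Group G] (S : GarsideStructureNF G) (x y : G)
    (k l : ℕ) (X : G) : Set G :=
  {Z ∈ Qset S x y k l (lenQ S x y k l X) | IsConj X Z}
/-! ### Auxiliary Garside theory developed from the axioms -/

namespace GarsideStructureNF

variable {G : Type*} [Group G] (S : GarsideStructureNF G)

lemma le_refl' (a : G) : S.le a a := by
  unfold GarsideStructure.le; simpa using S.one_mem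

lemma le_trans' {a b c : G} (h1 : S.le a b) (h2 : S.le b c) : S.le a c := by
  have := S.mul_mem h1 h2
  unfold GarsideStructure.le at *
  simpa [mul_assoc] using this

lemma le_antisymm' {a b : G} (h1 : S.le a b) (h2 : S.le b a) : a = b := by
  have h3 : (a⁻¹ * b)⁻¹ ∈ S.P := by simpa [mul_inv_rev, GarsideStructure.le] using h2
  have := S.inter_inv _ h1 h3
  have : b = a * 1 := by rw [← this]; group
  simp [this]

lemma le_mul_left {a b : G} (c : G) (h : S.le a b) : S.le (c * a) (c * b) := by
  unfold GarsideStructure.le at *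
  simpa [mul_assoc] using h

lemma le_mul_left_iff {a b c : G} : S.le (c * a) (c * b) ↔ S.le a b := by
  constructor
  · intro h; have := S.le_mul_left c⁻¹ h; simpa using this
  · exact S.le_mul_left c

lemma one_le_iff {a : G} : S.le 1 a ↔ a ∈ S.P := by
  unfold GarsideStructure.le; simp

lemma le_one_iff {a : G} : S.le a 1 ↔ a⁻¹ ∈ S.P := by
  unfold GarsideStructure.le; simp

lemma le_def {a b : G} : S.le a b ↔ a⁻¹ * b ∈ S.P := Iff.rfl

lemma mem_of_le {a b : G} (h : S.le a b) (ha : a ∈ S.P) : b ∈ S.P := by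
  have := S.mul_mem ha h
  simpa [mul_assoc] using this

lemma le_mul_right {a : G} (b : G) -- b * a ≽ b
     (ha : a ∈ S.P) : S.le b (b * a) := by
  unfold GarsideStructure.le; simpa [mul_assoc] using ha

lemma le_of_eq_mul {a b c : G} (h : b = a * c) (hc : c ∈ S.P) : S.le a b := by
  subst h; exact S.le_mul_right (a := c) a hc

lemma eq_one_of_le_one {a : G} (ha : a ∈ S.P) (h : S.le a 1) : a = 1 := by
  exact S.inter_inv a ha ((S.le_one_iff).1 h)

lemma le_one_of_mem {a : G} (ha : a ∈ S.P) : S.le 1 a := (S.one_le_iff).2 ha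

/-- powers of Δ are positive -/
lemma delta_pow_mem (m : ℕ) : S.Δ ^ m ∈ S.P := by
  induction m with
  | zero => simpa using S.one_mem
  | succ n ih => rw [pow_succ]; exact S.mul_mem ih S.Δ_mem

lemma delta_zpow_mem {m : ℤ} (hm : 0 ≤ m) : S.Δ ^ m ∈ S.P := by
  lift m to ℕ using hm
  rw [zpow_natCast]; exact S.delta_pow_mem m

lemma delta_ne_one_of_atom {x : G} (hx : S.IsAtom' x) : S.Δ ≠ 1 := by
  intro hΔ
  have hset : {a : G | a ∈ S.P ∧ a⁻¹ * S.Δ ∈ S.P} = {1} := by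
    ext a
    simp only [Set.mem_setOf_eq, Set.mem_singleton_iff, hΔ, mul_one]
    constructor
    · rintro ⟨h1, h2⟩; exact S.inter_inv a h1 h2
    · rintro rfl; simpa using S.one_mem
  have hgen := S.simples_generate
  rw [hset, Subgroup.closure_singleton_one] at hgen
  have : x ∈ (⊥ : Subgroup G) := by rw [hgen]; trivial
  rw [Subgroup.mem_bot] at this
  exact hx.2.1 this

end GarsideStructureNF
namespace GarsideStructureNF

variable {G : Type*} [Group G] (S : GarsideStructureNF G)

lemma wedge_le_left' (a b : G) : S.le (S.wedge a b) a := S.wedge_le_left a b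
lemma wedge_le_right' (a b : G) : S.le (S.wedge a b) b := S.wedge_le_right a b
lemma le_wedge' {a b c : G} (h1 : S.le c a) (h2 : S.le c b) : S.le c (S.wedge a b) :=
  S.le_wedge a b c h1 h2
lemma le_vee_left' (a b : G) : S.le a (S.vee a b) := S.le_vee_left a b
lemma le_vee_right' (a b : G) : S.le b (S.vee a b) := S.le_vee_right a b
lemma vee_le' {a b c : G} (h1 : S.le a c) (h2 : S.le b c) : S.le (S.vee a b) c :=
  S.vee_le a b c h1 h2

lemma wedge_unique {a b c : G} (h1 : S.le c a) (h2 : S.le c b)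
    (h3 : ∀ d, S.le d a → S.le d b → S.le d c) : S.wedge a b = c := by
  apply S.le_antisymm'
  · exact h3 _ (S.wedge_le_left' a b) (S.wedge_le_right' a b)
  · exact S.le_wedge' h1 h2

lemma wedge_comm (a b : G) : S.wedge a b = S.wedge b a := by
  apply S.wedge_unique (S.wedge_le_right' b a) (S.wedge_le_left' b a)
  intro d h1 h2
  exact S.le_wedge' h2 h1

lemma wedge_eq_left {a b : G} (h : S.le a b) : S.wedge a b = a := by
  apply S.wedge_unique (S.le_refl' a) h
  intro d h1 _; exact h1

lemma wedge_one_left {a : G} (ha : a ∈ S.P) : S.wedge 1 a = 1 :=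
  S.wedge_eq_left ((S.one_le_iff).2 ha)

/-! ### Simples and the complement ∂ -/

lemma simple_one : S.IsSimple 1 :=
  ⟨S.one_mem, by unfold GarsideStructure.le; simpa using S.Δ_mem⟩

lemma simple_delta : S.IsSimple S.Δ :=
  ⟨S.Δ_mem, S.le_refl' _⟩

lemma simple_le_delta {a : G} (h : S.IsSimple a) : S.le a S.Δ := h.2

lemma mul_dl (a : G) : a * S.dl a = S.Δ := by unfold GarsideStructure.dl; group

lemma dl_mem {a : G} (h : S.IsSimple a) : S.dl a ∈ S.P := h.2

lemma dl_simple {a : G} (h : S.IsSimple a) : S.IsSimple (S.dl a) := by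
  refine ⟨h.2, ?_⟩
  unfold GarsideStructure.dl GarsideStructure.le
  have := S.conj_mem a h.1
  simpa [mul_assoc] using this

lemma dl_le_delta {a : G} (h : S.IsSimple a) : S.le (S.dl a) S.Δ := (S.dl_simple h).2

lemma le_dl_iff {a b : G} : S.le b (S.dl a) ↔ S.le (a * b) S.Δ := by
  unfold GarsideStructure.le GarsideStructure.dl
  constructor <;> intro h <;> [skip; skip] <;> simpa [mul_assoc, mul_inv_rev] using h

lemma dl_eq_one_iff {a : G} : S.dl a = 1 ↔ a = S.Δ := by
  unfold GarsideStructure.dl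
  constructor
  · intro h; have : a * (a⁻¹ * S.Δ) = a * 1 := by rw [h]
    simpa using this.symm
  · intro h; simp [h]

lemma dl_eq_delta_iff {a : G} : S.dl a = S.Δ ↔ a = 1 := by
  unfold GarsideStructure.dl
  constructor
  · intro h
    have : a * (a⁻¹ * S.Δ) = a * S.Δ := by rw [h]
    have h2 : 1 * S.Δ = a * S.Δ := by simpa [mul_assoc] using this
    have := mul_right_cancel h2
    exact this.symm
  · intro h; simp [h]

/-- Key identity: `(A·B) ∧ Δ = A·(B ∧ ∂A)` for `A` simple, `B` positive. -/
lemma wedge_mul_delta {A B : G} (hA : S.IsSimple A) (hB : B ∈ S.P) :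
    S.wedge (A * B) S.Δ = A * S.wedge B (S.dl A) := by
  apply S.wedge_unique
  · exact S.le_mul_left A (S.wedge_le_left' _ _)
  · have h1 : S.le (A * S.wedge B (S.dl A)) (A * S.dl A) :=
      S.le_mul_left A (S.wedge_le_right' _ _)
    rw [S.mul_dl] at h1; exact h1
  · intro d hd1 hd2
    set e := S.vee A d with he
    have heAB : S.le e (A * B) := S.vee_le' (S.le_mul_right (a := B) A hB) hd1
    have heΔ : S.le e S.Δ := S.vee_le' (S.simple_le_delta hA) hd2
    have hg : S.le (A⁻¹ * e) ((A⁻¹ * (A * B))) := S.le_mul_left A⁻¹ heAB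
    have hgB : S.le (A⁻¹ * e) B := by simpa [mul_assoc] using hg
    have hgdl : S.le (A⁻¹ * e) (S.dl A) := by
      have := S.le_mul_left A⁻¹ heΔ
      simpa [GarsideStructure.dl] using this
    have hgw : S.le (A⁻¹ * e) (S.wedge B (S.dl A)) := S.le_wedge' hgB hgdl
    have : S.le e (A * S.wedge B (S.dl A)) := by
      have := S.le_mul_left A hgw
      simpa [mul_assoc] using this
    exact S.le_trans' (S.le_vee_right' A d) this

/-- Criterion: `A·B` is left weighted iff `B ∧ ∂A = 1`. -/
lemma leftWeighted_iff {A B : G} (hA : S.IsSimple A) (hB : B ∈ S.P) :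
    S.LeftWeighted A B ↔ S.wedge B (S.dl A) = 1 := by
  unfold GarsideStructure.LeftWeighted
  rw [S.wedge_mul_delta hA hB]
  constructor
  · intro h
    have := h.symm
    have h2 : A * S.wedge B (S.dl A) = A * 1 := by simpa using this
    exact mul_left_cancel h2
  · intro h; rw [h, mul_one]

end GarsideStructureNF
namespace GarsideStructureNF

variable {G : Type*} [Group G] (S : GarsideStructureNF G)

lemma prod_mem_P {w : List G} (h : ∀ a ∈ w, a ∈ S.P) : w.prod ∈ S.P := by
  induction w with
  | nil => simpa using S.one_mem
  | cons a t ih =>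
      rw [List.prod_cons]
      exact S.mul_mem (h a (by simp)) (ih (fun b hb => h b (by simp [hb])))

lemma prod_ne_one {w : List G} (hw : w ≠ []) (h : ∀ a ∈ w, a ∈ S.P ∧ a ≠ 1) :
    w.prod ≠ 1 := by
  induction w with
  | nil => exact absurd rfl hw
  | cons a t _ =>
      rw [List.prod_cons]
      intro hc
      have ha := h a (by simp)
      have htP : t.prod ∈ S.P := S.prod_mem_P (fun b hb => (h b (by simp [hb])).1)
      have : a⁻¹ ∈ S.P := by
        have h3 : t.prod = a⁻¹ := by
          have : a⁻¹ * (a * t.prod) = a⁻¹ * 1 := by rw [hc]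
          simpa [mul_assoc] using this
        rw [← h3]; exact htP
      exact ha.2 (S.inter_inv a ha.1 this)

/-- The defining set for the norm. -/
lemma norm_bddAbove {X : G} (hX : X ∈ S.P) (hX1 : X ≠ 1) :
    BddAbove {k : ℕ | ∃ w : List G, w.length = k ∧ (∀ a ∈ w, a ∈ S.P ∧ a ≠ 1) ∧
      w.prod = X} := S.len_bdd X hX hX1

lemma norm_one' : S.norm 1 = 0 := by
  unfold GarsideStructure.norm
  have : {k : ℕ | ∃ w : List G, w.length = k ∧ (∀ a ∈ w, a ∈ S.P ∧ a ≠ 1) ∧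
      w.prod = (1 : G)} = {0} := by
    ext k
    simp only [Set.mem_setOf_eq, Set.mem_singleton_iff]
    constructor
    · rintro ⟨w, rfl, hw, hprod⟩
      by_contra hk
      have : w ≠ [] := by intro h; subst h; simp at hk
      exact S.prod_ne_one this hw hprod
    · rintro rfl; exact ⟨[], by simp⟩
  rw [this, csSup_singleton]

lemma one_le_norm {a : G} (ha : a ∈ S.P) (ha1 : a ≠ 1) : 1 ≤ S.norm a := by
  unfold GarsideStructure.norm
  apply le_csSup (S.norm_bddAbove ha ha1)
  exact ⟨[a], by simp [ha, ha1]⟩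

lemma norm_eq_zero_iff {a : G} (ha : a ∈ S.P) : S.norm a = 0 ↔ a = 1 := by
  constructor
  · intro h
    by_contra h1
    have := S.one_le_norm ha h1
    omega
  · intro h; subst h; exact S.norm_one'

lemma norm_atom {a : G} (ha : S.IsAtom' a) : S.norm a = 1 := by
  unfold GarsideStructure.norm
  have : {k : ℕ | ∃ w : List G, w.length = k ∧ (∀ b ∈ w, b ∈ S.P ∧ b ≠ 1) ∧
      w.prod = a} = {1} := by
    ext k
    simp only [Set.mem_setOf_eq, Set.mem_singleton_iff]
    constructor
    · rintro ⟨w, rfl, hw, hprod⟩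
      match w, hprod, hw with
      | [], hprod, _ => exact absurd hprod.symm ha.2.1
      | [b], _, _ => rfl
      | (b :: c :: t), hprod, hw =>
          exfalso
          apply ha.2.2
          refine ⟨b, (c :: t).prod, (hw b (by simp)).1, (hw b (by simp)).2,
            S.prod_mem_P (fun d hd => (hw d (by simp [hd])).1), ?_, ?_⟩
          · exact S.prod_ne_one (by simp) (fun d hd => hw d (by simp [hd]))
          · rw [← hprod]; simp
    · rintro rfl
      exact ⟨[a], by simp [ha.1, ha.2.1]⟩
  rw [this, csSup_singleton]

lemma atom_of_norm_one (hhom : S.Homogeneous) {a : G} (ha : a ∈ S.P)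
    (hn : S.norm a = 1) : S.IsAtom' a := by
  refine ⟨ha, ?_, ?_⟩
  · intro h; subst h; rw [S.norm_one'] at hn; omega
  · rintro ⟨b, c, hb, hb1, hc, hc1, rfl⟩
    have := hhom b hb c hc
    have h1 := S.one_le_norm hb hb1
    have h2 := S.one_le_norm hc hc1
    omega

lemma norm_mul_ge (hhom : S.Homogeneous) {a b : G} (ha : a ∈ S.P) (ha1 : a ≠ 1)
    (hb : b ∈ S.P) : S.norm b < S.norm (a * b) := by
  rw [hhom a ha b hb]
  have := S.one_le_norm ha ha1
  omega

/-! ### The head lemma: for a left-weighted word, `w.prod ∧ Δ = w.head` -/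

lemma head_lemma : ∀ (w : List G) (hw : w ≠ []), (∀ a ∈ w, S.IsSimple a) →
    List.Chain' S.LeftWeighted w → S.wedge w.prod S.Δ = w.head hw := by
  intro w
  induction w with
  | nil => intro h; exact absurd rfl h
  | cons A t ih =>
      intro _ hsimp hchain
      simp only [List.head_cons, List.prod_cons]
      have hA : S.IsSimple A := hsimp A (by simp)
      have htP : t.prod ∈ S.P :=
        S.prod_mem_P (fun b hb => (hsimp b (by simp [hb])).1)
      apply S.wedge_unique
      · exact S.le_mul_right (a := t.prod) A htP
      · exact S.simple_le_delta hA
      · intro d hd1 hd2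
        -- s := A⁻¹ * (A ∨ d)
        set e := S.vee A d with he
        have heP : S.le e (A * t.prod) := S.vee_le' (S.le_mul_right (a := t.prod) A htP) hd1
        have heΔ : S.le e S.Δ := S.vee_le' (S.simple_le_delta hA) hd2
        have hs1 : S.le (A⁻¹ * e) t.prod := by
          have := S.le_mul_left A⁻¹ heP; simpa [mul_assoc] using this
        have hs2 : S.le (A⁻¹ * e) (S.dl A) := by
          have := S.le_mul_left A⁻¹ heΔ
          simpa [GarsideStructure.dl] using this
        have hsP : A⁻¹ * e ∈ S.P := S.le_vee_left A d
        have hs0 : A⁻¹ * e = 1 := by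
          match t, hchain, hsimp, hs1 with
          | [], _, _, hs1 =>
              apply S.eq_one_of_le_one hsP
              simpa using hs1
          | (B :: t'), hchain, hsimp, hs1 =>
              have hB : S.IsSimple B := hsimp B (by simp)
              have ht' : ∀ a ∈ (B :: t'), S.IsSimple a :=
                fun a haa => hsimp a (by simp [haa] )
              have hchain' : List.Chain' S.LeftWeighted (B :: t') :=
                hchain.tail
              have hhead := ih (by simp) ht' hchain'
              simp only [List.head_cons] at hhead
              have hLW : S.LeftWeighted A B := List.isChain_cons_cons.1 hchain |>.1
              have hcrit := (S.leftWeighted_iff hA hB.1).1 hLW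
              have hs3 : S.le (A⁻¹ * e) S.Δ :=
                S.le_trans' hs2 (S.dl_le_delta hA)
              have hsB : S.le (A⁻¹ * e) B := by
                rw [← hhead]; exact S.le_wedge' hs1 hs3
              have : S.le (A⁻¹ * e) (S.wedge B (S.dl A)) := S.le_wedge' hsB hs2
              rw [hcrit] at this
              exact S.eq_one_of_le_one hsP this
        have heA : e = A := by
          have : A * (A⁻¹ * e) = A * 1 := by rw [hs0]
          simpa [mul_assoc] using this
        rw [← heA]
        exact S.le_vee_right' A d

end GarsideStructureNF
namespace GarsideStructureNF

variable {G : Type*} [Group G] (S : GarsideStructureNF G)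

/-- Valid normal-form words. -/
def ValidWord (w : List G) : Prop :=
  (∀ a ∈ w, S.IsSimple a ∧ a ≠ 1 ∧ a ≠ S.Δ) ∧ List.Chain' S.LeftWeighted w

lemma nf_spec {X : G} {p : ℤ} {w : List G} (hw : S.ValidWord w)
    (hX : X = S.Δ ^ p * w.prod) : S.nfInf X = p ∧ S.nfWord X = w := by
  obtain ⟨h1, h2⟩ := S.nf_unique X p w hw.1 hw.2 hX
  exact ⟨h1.symm, h2.symm⟩

lemma ell_eq {X : G} {p : ℤ} {w : List G} (hw : S.ValidWord w)
    (hX : X = S.Δ ^ p * w.prod) : S.ell X = w.length := by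
  unfold ell; rw [(S.nf_spec hw hX).2]

lemma validWord_nf (X : G) : S.ValidWord (S.nfWord X) :=
  ⟨S.nf_factors X, S.nf_chain X⟩

lemma ell_one : S.ell 1 = 0 := by
  have h : (1 : G) = S.Δ ^ (0 : ℤ) * ([] : List G).prod := by simp
  have := S.ell_eq (X := (1 : G)) (w := []) (p := 0) ⟨by simp, by simp [List.Chain']⟩ h
  simpa using this

lemma delta_zpow_eq_one (hΔ : S.Δ ≠ 1) {m : ℤ} (h : S.Δ ^ m = 1) : m = 0 := by
  have key : ∀ q : ℤ, 1 ≤ q → S.Δ ^ q = 1 → False := by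
    intro q hq hq1
    have : S.Δ ^ q = S.Δ * S.Δ ^ (q - 1) := by
      rw [← zpow_one_add]; ring_nf
    rw [hq1] at this
    have hd : S.Δ⁻¹ = S.Δ ^ (q - 1) := by
      have := congrArg (S.Δ⁻¹ * ·) this
      simpa [mul_assoc] using this
    have : S.Δ⁻¹ ∈ S.P := by rw [hd]; exact S.delta_zpow_mem (by omega)
    exact hΔ (S.inter_inv _ S.Δ_mem this)
  rcases lt_trichotomy m 0 with hm | hm | hm
  · exfalso
    refine key (-m) (by omega) ?_
    rw [zpow_neg, h, inv_one]
  · exact hm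
  · exact absurd (key m (by omega) h) (by simp)

/-- T4: positive elements have nonnegative infimum. -/
lemma nfInf_nonneg (hΔ : S.Δ ≠ 1) {X : G} (hX : X ∈ S.P) : 0 ≤ S.nfInf X := by
  by_contra hneg
  push_neg at hneg
  have hXeq := S.nf_prod X
  set p := S.nfInf X with hp
  clear_value p
  rcases hw : S.nfWord X with _ | ⟨A, t⟩
  · rw [hw] at hXeq
    simp only [List.prod_nil, mul_one] at hXeq
    have hXinv : X⁻¹ ∈ S.P := by
      rw [hXeq, ← zpow_neg]; exact S.delta_zpow_mem (by omega)
    have hX1 : X = 1 := S.inter_inv X hX hXinv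
    have h1 : S.Δ ^ p = 1 := by rw [← hXeq, hX1]
    have := S.delta_zpow_eq_one hΔ h1
    omega
  · rw [hw] at hXeq
    have hsimp : ∀ a ∈ (A :: t), S.IsSimple a := by
      intro a haa
      exact ((S.nf_factors X a (by rw [hw]; exact haa)).1)
    have hchain : List.Chain' S.LeftWeighted (A :: t) := by
      have := S.nf_chain X; rwa [hw] at this
    have hΔle : S.le S.Δ (A :: t).prod := by
      unfold GarsideStructure.le
      have heq : (A :: t).prod = S.Δ ^ (-p) * X := by
        rw [hXeq]; rw [← mul_assoc, ← zpow_add]; simp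
      rw [heq, ← mul_assoc]
      have h1 : S.Δ⁻¹ * S.Δ ^ (-p) = S.Δ ^ (-p - 1) := by
        rw [← zpow_neg_one, ← zpow_add]; ring_nf
      rw [h1]
      exact S.mul_mem (S.delta_zpow_mem (by omega)) hX
    have hhead := S.head_lemma (A :: t) (by simp) hsimp hchain
    simp only [List.head_cons] at hhead
    have hΔA : S.le S.Δ A := by
      rw [← hhead]; exact S.le_wedge' hΔle (S.le_refl' _)
    have hAΔ : S.le A S.Δ := (hsimp A (by simp)).2
    have : A = S.Δ := S.le_antisymm' hAΔ hΔA
    exact (S.nf_factors X A (by rw [hw]; simp)).2.2 this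

/-- every positive element is a product of simples -/
lemma exists_simple_factorization (hΔ : S.Δ ≠ 1) {X : G} (hX : X ∈ S.P) :
    ∃ w : List G, (∀ a ∈ w, S.IsSimple a) ∧ w.prod = X := by
  have hp := S.nfInf_nonneg hΔ hX
  refine ⟨List.replicate (S.nfInf X).toNat S.Δ ++ S.nfWord X, ?_, ?_⟩
  · intro a ha
    rcases List.mem_append.1 ha with h | h
    · rw [List.eq_of_mem_replicate h]; exact S.simple_delta
    · exact (S.nf_factors X a h).1
  · rw [List.prod_append, List.prod_replicate, ← zpow_natCast,
      Int.toNat_of_nonneg hp]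
    exact (S.nf_prod X).symm

end GarsideStructureNF
namespace GarsideStructureNF

variable {G : Type*} [Group G] (S : GarsideStructureNF G)

/-- conjugation by `Δ^m`. -/
def rho (m : ℤ) (a : G) : G := S.Δ ^ m * a * S.Δ ^ (-m)

lemma rho_mul (m : ℤ) (a b : G) : S.rho m (a * b) = S.rho m a * S.rho m b := by
  unfold rho; group

lemma rho_rho (m m' : ℤ) (a : G) : S.rho m (S.rho m' a) = S.rho (m + m') a := by
  unfold rho; group

lemma rho_zero (a : G) : S.rho 0 a = a := by unfold rho; simp

lemma rho_one_elt (m : ℤ) : S.rho m 1 = 1 := by unfold rho; simp [← zpow_add]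

lemma rho_delta (m : ℤ) : S.rho m S.Δ = S.Δ := by
  unfold rho
  have h1 : S.Δ ^ m * S.Δ = S.Δ * S.Δ ^ m := by
    rw [← zpow_one_add, ← zpow_add_one]; ring_nf
  rw [h1, mul_assoc, ← zpow_add]
  simp

lemma rho_inv (m : ℤ) (a : G) : S.rho m a⁻¹ = (S.rho m a)⁻¹ := by
  unfold rho; simp [mul_assoc]

lemma rho_injective (m : ℤ) {a b : G} (h : S.rho m a = S.rho m b) : a = b := by
  unfold rho at h
  have h1 := mul_right_cancel h
  exact mul_left_cancel h1

lemma tau_simple {s : G} (hs : S.IsSimple s) : S.IsSimple (S.rho (-1) s) := by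
  have h1 : S.rho (-1) s = S.Δ⁻¹ * s * S.Δ := by unfold rho; simp
  constructor
  · rw [h1]; exact S.conj_mem s hs.1
  · rw [le_def, h1]
    have : (S.Δ⁻¹ * s * S.Δ)⁻¹ * S.Δ = S.Δ⁻¹ * (s⁻¹ * S.Δ) * S.Δ := by group
    rw [this]
    exact S.conj_mem _ hs.2

lemma tau_simple_surj (hft : S.FiniteType) {s : G} (hs : S.IsSimple s) :
    ∃ s' : G, S.IsSimple s' ∧ S.rho (-1) s' = s := by
  classical
  haveI : Finite {a : G // S.IsSimple a} := hft.to_subtype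
  set f : {a : G // S.IsSimple a} → {a : G // S.IsSimple a} :=
    fun a => ⟨S.rho (-1) a.1, S.tau_simple a.2⟩ with hf
  have hinj : Function.Injective f := by
    intro a b hab
    have := congrArg Subtype.val hab
    simp only [hf] at this
    exact Subtype.ext (S.rho_injective (-1) this)
  have hsurj : Function.Surjective f := Finite.surjective_of_injective hinj
  obtain ⟨a, ha⟩ := hsurj ⟨s, hs⟩
  exact ⟨a.1, a.2, congrArg Subtype.val ha⟩

lemma rho_pos_one_simple (hft : S.FiniteType) {s : G} (hs : S.IsSimple s) :
    S.IsSimple (S.rho 1 s) := by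
  obtain ⟨s', hs', heq⟩ := S.tau_simple_surj hft hs
  have : S.rho 1 s = s' := by
    rw [← heq, S.rho_rho]; simpa using (S.rho_zero s').symm ▸ rfl
  rw [this]; exact hs'

lemma rho_pos_one_mem (hft : S.FiniteType) (hΔ : S.Δ ≠ 1) {a : G} (ha : a ∈ S.P) :
    S.rho 1 a ∈ S.P := by
  obtain ⟨w, hw, hprod⟩ := S.exists_simple_factorization hΔ ha
  rw [← hprod]
  clear hprod ha
  induction w with
  | nil => simpa [S.rho_one_elt] using S.one_mem
  | cons b t ih =>
      rw [List.prod_cons, S.rho_mul]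
      exact S.mul_mem (S.rho_pos_one_simple hft (hw b (by simp))).1
        (ih (fun c hc => hw c (by simp [hc])))

lemma rho_neg_one_mem {a : G} (ha : a ∈ S.P) : S.rho (-1) a ∈ S.P := by
  have : S.rho (-1) a = S.Δ⁻¹ * a * S.Δ := by unfold rho; simp
  rw [this]; exact S.conj_mem a ha

lemma rho_mem (hft : S.FiniteType) (hΔ : S.Δ ≠ 1) (m : ℤ) {a : G} (ha : a ∈ S.P) :
    S.rho m a ∈ S.P := by
  induction m using Int.induction_on with
  | zero => rw [S.rho_zero]; exact ha
  | succ n ih =>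
      have : ((n : ℤ) + 1) = 1 + n := by ring
      rw [this, ← S.rho_rho]
      exact S.rho_pos_one_mem hft hΔ ih
  | pred n ih =>
      have : (-(n : ℤ) - 1) = -1 + -n := by ring
      rw [this, ← S.rho_rho]
      exact S.rho_neg_one_mem ih

lemma rho_le_iff (hft : S.FiniteType) (hΔ : S.Δ ≠ 1) (m : ℤ) {a b : G} :
    S.le (S.rho m a) (S.rho m b) ↔ S.le a b := by
  have key : ∀ m' : ℤ, ∀ a b : G, S.le a b → S.le (S.rho m' a) (S.rho m' b) := by
    intro m' a b h
    rw [le_def] at h ⊢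
    rw [← S.rho_inv, ← S.rho_mul]
    exact S.rho_mem hft hΔ m' h
  constructor
  · intro h
    have := key (-m) _ _ h
    rwa [S.rho_rho, S.rho_rho, neg_add_cancel, S.rho_zero, S.rho_zero] at this
  · exact key m a b

lemma rho_wedge (hft : S.FiniteType) (hΔ : S.Δ ≠ 1) (m : ℤ) (a b : G) :
    S.rho m (S.wedge a b) = S.wedge (S.rho m a) (S.rho m b) := by
  symm
  apply S.wedge_unique
  · exact (S.rho_le_iff hft hΔ m).2 (S.wedge_le_left' a b)
  · exact (S.rho_le_iff hft hΔ m).2 (S.wedge_le_right' a b)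
  · intro d hd1 hd2
    have h1 : S.le (S.rho (-m) d) a := by
      have := (S.rho_le_iff hft hΔ (-m)).2 hd1
      rwa [S.rho_rho, neg_add_cancel, S.rho_zero] at this
    have h2 : S.le (S.rho (-m) d) b := by
      have := (S.rho_le_iff hft hΔ (-m)).2 hd2
      rwa [S.rho_rho, neg_add_cancel, S.rho_zero] at this
    have := (S.rho_le_iff hft hΔ m).2 (S.le_wedge' h1 h2)
    rwa [S.rho_rho, add_neg_cancel, S.rho_zero] at this

lemma rho_simple (hft : S.FiniteType) (hΔ : S.Δ ≠ 1) (m : ℤ) {a : G}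
    (ha : S.IsSimple a) : S.IsSimple (S.rho m a) := by
  constructor
  · exact S.rho_mem hft hΔ m ha.1
  · have := (S.rho_le_iff hft hΔ m).2 ha.2
    rwa [S.rho_delta] at this

lemma rho_dl (m : ℤ) (a : G) : S.dl (S.rho m a) = S.rho m (S.dl a) := by
  unfold GarsideStructure.dl rho
  have h1 : S.Δ ^ (-m) * S.Δ = S.Δ * S.Δ ^ (-m) := by
    rw [← zpow_one_add, ← zpow_add_one]; ring_nf
  simp only [mul_inv_rev, inv_inv, ← zpow_neg]
  rw [mul_assoc, mul_assoc, h1, ← mul_assoc, ← mul_assoc]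
  congr 1
  group

lemma dl_dl {a : G} : S.dl (S.dl a) = S.rho (-1) a := by
  unfold GarsideStructure.dl rho
  simp [mul_inv_rev]

lemma rho_atom (hft : S.FiniteType) (hΔ : S.Δ ≠ 1) (m : ℤ) {a : G}
    (ha : S.IsAtom' a) : S.IsAtom' (S.rho m a) := by
  refine ⟨S.rho_mem hft hΔ m ha.1, ?_, ?_⟩
  · intro h
    rw [← S.rho_one_elt m] at h
    exact ha.2.1 (S.rho_injective m h)
  · rintro ⟨b, c, hb, hb1, hc, hc1, heq⟩
    apply ha.2.2
    refine ⟨S.rho (-m) b, S.rho (-m) c, S.rho_mem hft hΔ (-m) hb, ?_,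
      S.rho_mem hft hΔ (-m) hc, ?_, ?_⟩
    · intro h; rw [← S.rho_one_elt (-m)] at h; exact hb1 (S.rho_injective (-m) h)
    · intro h; rw [← S.rho_one_elt (-m)] at h; exact hc1 (S.rho_injective (-m) h)
    · rw [← S.rho_mul]
      have := congrArg (S.rho (-m)) heq
      rwa [S.rho_rho, neg_add_cancel, S.rho_zero] at this

end GarsideStructureNF
namespace GarsideStructureNF

variable {G : Type*} [Group G] (S : GarsideStructureNF G)

/-- Complement lemma: if `u` is a positive prefix of a product of `j` simples, then
`u⁻¹ · (that product)` is a product of at most `j` simples. -/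
lemma complement_lemma : ∀ (ys : List G), (∀ s ∈ ys, S.IsSimple s) →
    ∀ u : G, u ∈ S.P → S.le u ys.prod →
    ∃ ts : List G, (∀ t ∈ ts, S.IsSimple t) ∧ ts.length ≤ ys.length ∧
      ts.prod = u⁻¹ * ys.prod := by
  intro ys
  induction ys with
  | nil =>
      intro _ u hu hle
      have : u = 1 := S.eq_one_of_le_one hu (by simpa using hle)
      exact ⟨[], by simp, by simp, by simp [this]⟩
  | cons s Y ih =>
      intro hsimp u hu hle
      have hs : S.IsSimple s := hsimp s (by simp)
      have hYP : Y.prod ∈ S.P := S.prod_mem_P (fun b hb => (hsimp b (by simp [hb])).1)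
      rw [List.prod_cons] at hle
      set e := S.vee u s with he
      have he1 : S.le e (s * Y.prod) := by
        apply S.vee_le' hle
        exact S.le_mul_right (a := Y.prod) s hYP
      have he2 : S.le e (u * S.Δ) := by
        apply S.vee_le'
        · exact S.le_mul_right (a := S.Δ) u S.Δ_mem
        · rw [le_def]
          have heq : s⁻¹ * (u * S.Δ) = (s⁻¹ * S.Δ) * (S.Δ⁻¹ * u * S.Δ) := by group
          rw [heq]
          exact S.mul_mem hs.2 (S.conj_mem u hu)
      have htP : u⁻¹ * e ∈ S.P := S.le_vee_left u s
      have htΔ : S.le (u⁻¹ * e) S.Δ := by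
        have := S.le_mul_left u⁻¹ he2
        simpa [mul_assoc] using this
      have hwP : s⁻¹ * e ∈ S.P := S.le_vee_right u s
      have hwY : S.le (s⁻¹ * e) Y.prod := by
        have := S.le_mul_left s⁻¹ he1
        simpa [mul_assoc] using this
      obtain ⟨ts', hts1, hts2, hts3⟩ :=
        ih (fun b hb => hsimp b (by simp [hb])) (s⁻¹ * e) hwP hwY
      refine ⟨(u⁻¹ * e) :: ts', ?_, by simp; omega, ?_⟩
      · intro t ht
        rcases List.mem_cons.1 ht with h | h
        · subst h; exact ⟨htP, htΔ⟩
        · exact hts1 t h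
      · rw [List.prod_cons, hts3, List.prod_cons]
        group

lemma wedge_delta_ne_one (hΔ : S.Δ ≠ 1) {X : G} (hX : X ∈ S.P) (hX1 : X ≠ 1) :
    S.wedge X S.Δ ≠ 1 := by
  have hp := S.nfInf_nonneg hΔ hX
  have hXeq := S.nf_prod X
  set p := S.nfInf X with hpdef
  clear_value p
  rcases Int.lt_or_le 0 p with h1 | h1
  · -- Δ ≼ X
    have hΔX : S.le S.Δ X := by
      rw [le_def, hXeq, ← mul_assoc]
      have : S.Δ⁻¹ * S.Δ ^ p = S.Δ ^ (p - 1) := by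
        rw [← zpow_neg_one, ← zpow_add]; ring_nf
      rw [this]
      exact S.mul_mem (S.delta_zpow_mem (by omega))
        (S.prod_mem_P (fun b hb => (S.nf_factors X b hb).1.1))
    intro hc
    have : S.le S.Δ (S.wedge X S.Δ) := S.le_wedge' hΔX (S.le_refl' _)
    rw [hc] at this
    exact hΔ (S.eq_one_of_le_one S.Δ_mem this)
  · have hp0 : p = 0 := by omega
    rw [hp0] at hXeq
    simp only [zpow_zero, one_mul] at hXeq
    rcases hw : S.nfWord X with _ | ⟨A, t⟩
    · rw [hw] at hXeq; simp at hXeq; exact absurd hXeq hX1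
    · rw [hw] at hXeq
      have hsimp : ∀ a ∈ (A :: t), S.IsSimple a :=
        fun a haa => (S.nf_factors X a (by rw [hw]; exact haa)).1
      have hchain : List.Chain' S.LeftWeighted (A :: t) := by
        have := S.nf_chain X; rwa [hw] at this
      have := S.head_lemma (A :: t) (by simp) hsimp hchain
      simp only [List.head_cons] at this
      rw [hXeq, this]
      exact (S.nf_factors X A (by rw [hw]; simp)).2.1

/-- T7: a product of `j` simples has a normal form `Δ^q · w` with `q + |w| ≤ j`. -/
lemma factor_bound (hhom : S.Homogeneous) (hΔ : S.Δ ≠ 1) :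
    ∀ (N : ℕ) (X : G), X ∈ S.P → S.norm X ≤ N →
    ∀ (ss : List G), (∀ s ∈ ss, S.IsSimple s) → ss.prod = X →
    ∃ (q : ℕ) (w : List G), S.ValidWord w ∧ X = S.Δ ^ (q : ℤ) * w.prod ∧
      q + w.length ≤ ss.length := by
  intro N
  induction N with
  | zero =>
      intro X hX hnorm ss _ _
      have : X = 1 := (S.norm_eq_zero_iff hX).1 (by omega)
      exact ⟨0, [], ⟨by simp, by simp [List.Chain']⟩, by simp [this], by simp⟩
  | succ N ih =>
      intro X hX hnorm ss hss hprod
      by_cases hX1 : X = 1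
      · exact ⟨0, [], ⟨by simp, by simp [List.Chain']⟩, by simp [hX1], by simp⟩
      -- the head
      set h := S.wedge X S.Δ with hh
      have hhP : h ∈ S.P := by
        have : S.le 1 h := S.le_wedge' (S.le_one_of_mem hX) (S.le_one_of_mem S.Δ_mem)
        exact (S.one_le_iff).1 this
      have hhsimple : S.IsSimple h := ⟨hhP, S.wedge_le_right' X S.Δ⟩
      have hh1 : h ≠ 1 := S.wedge_delta_ne_one hΔ hX hX1
      have hhX : S.le h X := S.wedge_le_left' X S.Δ
      set Y := h⁻¹ * X with hY
      have hYP : Y ∈ S.P := hhX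
      have hXhY : X = h * Y := by rw [hY]; group
      -- ss is nonempty
      rcases ss with _ | ⟨s₀, rest⟩
      · exfalso; apply hX1; rw [← hprod]; simp
      have hs₀ : S.IsSimple s₀ := hss s₀ (by simp)
      have hrestP : rest.prod ∈ S.P :=
        S.prod_mem_P (fun b hb => (hss b (by simp [hb])).1)
      have hs₀h : S.le s₀ h := by
        apply S.le_wedge'
        · exact S.le_of_eq_mul (by rw [← hprod]; simp) hrestP
        · exact hs₀.2
      have hu'P : s₀⁻¹ * h ∈ S.P := hs₀h
      have hu'rest : S.le (s₀⁻¹ * h) rest.prod := by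
        rw [le_def]
        have : (s₀⁻¹ * h)⁻¹ * rest.prod = h⁻¹ * (s₀ * rest.prod) := by group
        rw [this]
        have : s₀ * rest.prod = X := by rw [← hprod]; simp
        rw [this]
        exact hYP
      obtain ⟨ts, hts1, hts2, hts3⟩ :=
        S.complement_lemma rest (fun b hb => hss b (by simp [hb])) _ hu'P hu'rest
      have htsY : ts.prod = Y := by
        rw [hts3]
        have : (s₀⁻¹ * h)⁻¹ * rest.prod = h⁻¹ * (s₀ * rest.prod) := by group
        rw [this]
        have : s₀ * rest.prod = X := by rw [← hprod]; simp
        rw [this]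
      -- norm decreases
      have hnormY : S.norm Y ≤ N := by
        have := hhom h hhP Y hYP
        rw [← hXhY] at this
        have h1 := S.one_le_norm hhP hh1
        omega
      obtain ⟨q', w', hw'valid, hYeq, hcount⟩ := ih Y hYP hnormY ts hts1 htsY
      by_cases hhΔ : h = S.Δ
      · refine ⟨q' + 1, w', hw'valid, ?_, ?_⟩
        · rw [hXhY, hYeq, hhΔ, ← mul_assoc]
          congr 1
          rw [← zpow_one_add]
          congr 1
          push_cast; ring
        · simp only [List.length_cons]; omega
      · -- q' = 0
        have hq'0 : q' = 0 := by
          by_contra hq'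
          have hΔY : S.le S.Δ Y := by
            rw [le_def, hYeq, ← mul_assoc]
            have : S.Δ⁻¹ * S.Δ ^ (q' : ℤ) = S.Δ ^ ((q' : ℤ) - 1) := by
              rw [← zpow_neg_one, ← zpow_add]; ring_nf
            rw [this]
            exact S.mul_mem (S.delta_zpow_mem (by omega))
              (S.prod_mem_P (fun b hb => (hw'valid.1 b hb).1.1))
          have hΔX : S.le S.Δ X := by
            have h1 : S.le S.Δ (h * S.Δ) := by
              rw [le_def]
              have : S.Δ⁻¹ * (h * S.Δ) = S.Δ⁻¹ * h * S.Δ := by group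
              rw [this]; exact S.conj_mem h hhP
            have h2 : S.le (h * S.Δ) (h * Y) := S.le_mul_left h hΔY
            rw [← hXhY] at h2
            exact S.le_trans' h1 h2
          have : S.le S.Δ h := S.le_wedge' hΔX (S.le_refl' _)
          exact hhΔ (S.le_antisymm' hhsimple.2 this)
        subst hq'0
        simp only [Nat.cast_zero, zpow_zero, one_mul, zero_add] at hYeq hcount
        cases w' with
        | nil =>
            simp only [List.prod_nil] at hYeq
            refine ⟨0, [h], ⟨?_, by simp [List.Chain']⟩, ?_, ?_⟩
            · intro a ha; simp at ha; subst ha; exact ⟨hhsimple, hh1, hhΔ⟩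
            · rw [hXhY, hYeq]; simp
            · simp
        | cons B t' =>
            have hB : S.IsSimple B := (hw'valid.1 B (by simp)).1
            have ht'P : t'.prod ∈ S.P :=
              S.prod_mem_P (fun b hb => (hw'valid.1 b (by simp [hb])).1.1)
            have hBY : S.le B Y := by
              rw [hYeq, List.prod_cons]
              exact S.le_mul_right (a := t'.prod) B ht'P
            have hheadw' : S.wedge Y S.Δ = B := by
              have hsimp' : ∀ a ∈ (B :: t'), S.IsSimple a :=
                fun a haa => (hw'valid.1 a haa).1
              have := S.head_lemma (B :: t') (by simp) hsimp' hw'valid.2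
              simp only [List.head_cons] at this
              rw [hYeq, this]
            have hLW : S.LeftWeighted h B := by
              unfold GarsideStructure.LeftWeighted
              symm
              apply S.wedge_unique
              · exact S.le_mul_right (a := B) h hB.1
              · exact hhsimple.2
              · intro d hd1 hd2
                have hdX : S.le d X := by
                  apply S.le_trans' hd1
                  rw [hXhY]
                  exact S.le_mul_left h hBY
                exact S.le_wedge' hdX hd2
            refine ⟨0, h :: B :: t', ?_, ?_, ?_⟩
            · constructor
              · intro a ha
                rcases List.mem_cons.1 ha with h' | h'
                · subst h'; exact ⟨hhsimple, hh1, hhΔ⟩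
                · exact hw'valid.1 a h'
              · rw [List.Chain', List.isChain_cons_cons]
                exact ⟨hLW, hw'valid.2⟩
            · rw [List.prod_cons (a := h), ← hYeq, ← hXhY]
              simp
            · simp only [List.length_cons] at hcount ⊢
              omega

/-- Corollary: `ℓ(product of j simples) ≤ j`. -/
lemma ell_le_of_simples (hhom : S.Homogeneous) (hΔ : S.Δ ≠ 1) {X : G}
    (ss : List G) (hss : ∀ s ∈ ss, S.IsSimple s) (hprod : ss.prod = X) :
    S.ell X ≤ ss.length := by
  have hX : X ∈ S.P := by
    rw [← hprod]; exact S.prod_mem_P (fun b hb => (hss b hb).1)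
  obtain ⟨q, w, hvalid, hXeq, hcount⟩ :=
    S.factor_bound hhom hΔ (S.norm X) X hX le_rfl ss hss hprod
  rw [S.ell_eq hvalid hXeq]
  omega

end GarsideStructureNF
namespace GarsideStructureNF

variable {G : Type*} [Group G] (S : GarsideStructureNF G)

lemma atom_le {a t : G} (ha : S.IsAtom' a) (ht : t ∈ S.P) (hle : S.le t a) :
    t = 1 ∨ t = a := by
  by_cases h1 : t = 1
  · exact Or.inl h1
  by_cases h2 : t⁻¹ * a = 1
  · right
    have : t * (t⁻¹ * a) = t * 1 := by rw [h2]
    simpa [mul_assoc] using this.symm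
  · exfalso
    exact ha.2.2 ⟨t, t⁻¹ * a, ht, h1, hle, h2, by group⟩

/-- Atoms are simple elements different from `Δ` (unless `Δ` itself is an atom). -/
lemma atom_proper (hhom : S.Homogeneous) (hΔ : S.Δ ≠ 1) (hnotΔ : ¬ S.IsAtom' S.Δ)
    {a : G} (ha : S.IsAtom' a) : S.IsSimple a ∧ a ≠ S.Δ := by
  have hp := S.nfInf_nonneg hΔ ha.1
  have hnorm : S.norm a = 1 := S.norm_atom ha
  have haeq := S.nf_prod a
  set p := S.nfInf a with hpdef
  clear_value p
  have haΔ : a ≠ S.Δ := fun h => hnotΔ (h ▸ ha)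
  rcases Int.lt_or_le 0 p with h1 | h1
  · exfalso
    have hwP : (S.nfWord a).prod ∈ S.P :=
      S.prod_mem_P (fun b hb => (S.nf_factors a b hb).1.1)
    have hrest : S.Δ⁻¹ * a ∈ S.P := by
      rw [haeq, ← mul_assoc]
      have : S.Δ⁻¹ * S.Δ ^ p = S.Δ ^ (p - 1) := by
        rw [← zpow_neg_one, ← zpow_add]; ring_nf
      rw [this]
      exact S.mul_mem (S.delta_zpow_mem (by omega)) hwP
    have hsplit := hhom S.Δ S.Δ_mem (S.Δ⁻¹ * a) hrest
    have hXeq2 : S.Δ * (S.Δ⁻¹ * a) = a := by group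
    rw [hXeq2] at hsplit
    have hΔn := S.one_le_norm S.Δ_mem hΔ
    have hrest1 : S.Δ⁻¹ * a = 1 := by
      apply (S.norm_eq_zero_iff hrest).1
      omega
    apply haΔ
    have h5 : S.Δ * (S.Δ⁻¹ * a) = S.Δ * 1 := by rw [hrest1]
    have h6 : a = S.Δ := by
      have := h5.symm
      simpa [mul_assoc] using this.symm
    exact h6
  · have hp0 : p = 0 := by omega
    rw [hp0] at haeq
    simp only [zpow_zero, one_mul] at haeq
    rcases hw : S.nfWord a with _ | ⟨A, t⟩
    · rw [hw] at haeq; simp at haeq; exact absurd haeq ha.2.1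
    · rcases t with _ | ⟨B, t2⟩
      · rw [hw] at haeq
        simp only [List.prod_cons, List.prod_nil, mul_one] at haeq
        have := S.nf_factors a A (by rw [hw]; simp)
        rw [haeq]
        exact ⟨this.1, this.2.2⟩
      · exfalso
        rw [hw] at haeq
        rw [List.prod_cons] at haeq
        apply ha.2.2
        have hfac : ∀ b ∈ (A :: B :: t2), S.IsSimple b ∧ b ≠ 1 ∧ b ≠ S.Δ :=
          fun b hb => S.nf_factors a b (by rw [hw]; exact hb)
        refine ⟨A, (B :: t2).prod, (hfac A (by simp)).1.1, (hfac A (by simp)).2.1,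
          S.prod_mem_P (fun b hb => (hfac b (by simp [hb])).1.1), ?_, haeq⟩
        exact S.prod_ne_one (by simp)
          (fun b hb => ⟨(hfac b (by simp [hb])).1.1, (hfac b (by simp [hb])).2.1⟩)

omit [Group G] in
lemma chain'_replicate_of {R : G → G → Prop} {a : G} (h : R a a) :
    ∀ k, List.Chain' R (List.replicate k a) := by
  intro k
  induction k with
  | zero => simp [List.Chain']
  | succ n ih =>
      rcases n with _ | n
      · simp [List.Chain']
      · rw [List.replicate_succ, List.Chain', List.isChain_cons]
        refine ⟨?_, ih⟩
        intro y hy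
        rw [List.replicate_succ, List.head?_cons] at hy
        simp at hy
        subst hy; exact h

/-- The word of `A`-factors built from a list `cs`. -/
def aword (cs : List G) : ℕ → G :=
  fun i => S.Δ ^ ((i : ℤ) + 1) * (cs.getD i 1)⁻¹ * S.Δ ^ (-(i : ℤ))

lemma aword_prod (cs : List G) : ∀ m, m ≤ cs.length →
    (((List.range m).map (S.aword cs)).reverse).prod
      = S.Δ ^ (m : ℤ) * ((cs.take m).prod)⁻¹ := by
  intro m
  induction m with
  | zero => simp
  | succ m ih =>
      intro hm
      have hm' : m < cs.length := by omega
      rw [List.range_succ, List.map_append, List.reverse_append]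
      simp only [List.map_cons, List.map_nil, List.reverse_cons, List.reverse_nil,
        List.nil_append, List.singleton_append, List.prod_cons]
      rw [ih (by omega)]
      have hgd : cs.getD m 1 = cs.get ⟨m, hm'⟩ := by
        rw [List.getD_eq_getElem cs 1 hm']
        simp
      have htake : (cs.take (m + 1)).prod = (cs.take m).prod * cs.get ⟨m, hm'⟩ :=
        List.prod_take_succ cs m hm'
      unfold aword
      rw [hgd, htake]
      have hz : S.Δ ^ (-(m : ℤ)) * S.Δ ^ (m : ℤ) = 1 := by
        rw [← zpow_add]; simp
      rw [mul_inv_rev]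
      push_cast
      group

end GarsideStructureNF
namespace GarsideStructureNF

variable {G : Type*} [Group G] (S : GarsideStructureNF G)

omit [Group G] in
lemma conj_pow_eq {G : Type*} [Group G] (c a : G) (m : ℕ) :
    (c * a * c⁻¹) ^ m = c * a ^ m * c⁻¹ := by
  induction m with
  | zero => simp
  | succ j ih => rw [pow_succ, ih, pow_succ]; group

lemma conj_witness_eq {G : Type*} [Group G] (Q t x₂ : G) (k : ℕ) :
    (t⁻¹ * Q)⁻¹ * (t⁻¹ * x₂ * t) ^ k * (t⁻¹ * Q) = Q⁻¹ * x₂ ^ k * Q := by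
  have h : t⁻¹ * x₂ * t = t⁻¹ * x₂ * (t⁻¹)⁻¹ := by simp
  rw [h, conj_pow_eq]
  group

end GarsideStructureNF
/-- **Lemma 3.3** (Orevkov): in a symmetric homogeneous Garside structure of finite type
(square free when `max(k,l) ≥ 2`), if `X ∈ 𝒬_min(X)` and `n = len_𝒬(X) > 0`, then the
left normal form of `X` is `δ^{-n} · A_n ⋯ A₁ · x₁^k · B₁ ⋯ B_n · y₁^l` with atoms
`x₁ ∈ x^G`, `y₁ ∈ y^G` and simple `A_i, B_i` with `A_i δ^{i-1} B_i = δ^i`. -/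
theorem statement11 {G : Type*} [Group G] (S : GarsideStructureNF G)
    (hft : S.FiniteType) (hsym : S.IsSymmetric) (hhom : S.Homogeneous)
    (k l : ℕ) (hk : 1 ≤ k) (hl : 1 ≤ l) (hsf : 2 ≤ max k l → S.SquareFree)
    (x y : G) (hx : S.IsAtom' x) (hy : S.IsAtom' y) (X : G)
    (hXprod : ∃ u v : G, IsConj (x ^ k) u ∧ IsConj (y ^ l) v ∧ X = u * v)
    (hX : X ∈ Qmin S x y k l X) (hn : 0 < lenQ S x y k l X) :
    ∃ (x₁ y₁ : G) (A B : Fin (lenQ S x y k l X) → G),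
      S.IsAtom' x₁ ∧ IsConj x x₁ ∧ S.IsAtom' y₁ ∧ IsConj y y₁ ∧
      (∀ i, S.IsSimple (A i) ∧ S.IsSimple (B i)) ∧
      (∀ i : Fin (lenQ S x y k l X),
        A i * S.Δ ^ (i : ℕ) * B i = S.Δ ^ ((i : ℕ) + 1)) ∧
      S.nfInf X = -(lenQ S x y k l X : ℤ) ∧
      S.nfWord X = (List.ofFn A).reverse ++ List.replicate k x₁ ++ List.ofFn B ++
        List.replicate l y₁ := by
  classical
  set n := lenQ S x y k l X with hndef
  obtain ⟨hXQ, -⟩ := hX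
  obtain ⟨P₀, x₀, y₀, hP₀l, hax₀, hcx₀, hay₀, hcy₀, hXeq₀⟩ := hXQ
  have hΔ1 : S.Δ ≠ 1 := S.delta_ne_one_of_atom hx
  -- membership criterion for lenQ
  have hSSle : ∀ (m : ℕ) (Z Pp x₂ y₂ : G), S.ell Pp ≤ m → S.IsAtom' x₂ →
      IsConj x x₂ → S.IsAtom' y₂ → IsConj y y₂ →
      Z = Pp⁻¹ * x₂ ^ k * Pp * y₂ ^ l → IsConj X Z → n ≤ m := by
    intro m Z Pp x₂ y₂ h1 h2 h3 h4 h5 h6 h7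
    rw [hndef]
    exact Nat.sInf_le ⟨Z, ⟨Pp, x₂, y₂, h1, h2, h3, h4, h5, h6⟩, h7⟩
  -- Δ is not an atom
  have hnotΔ : ¬ S.IsAtom' S.Δ := by
    intro hDatom
    -- every simple is 1 or Δ
    have hsimp2 : ∀ a : G, a ∈ S.P ∧ a⁻¹ * S.Δ ∈ S.P → a = 1 ∨ a = S.Δ := by
      intro a ⟨ha1, ha2⟩
      by_cases h1 : a = 1
      · exact Or.inl h1
      by_cases h2 : a⁻¹ * S.Δ = 1
      · right
        have : a * (a⁻¹ * S.Δ) = a * 1 := by rw [h2]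
        simpa [mul_assoc] using this.symm
      · exfalso
        exact hDatom.2.2 ⟨a, a⁻¹ * S.Δ, ha1, h1, ha2, h2, by group⟩
    have hzp : ∀ g : G, ∃ m : ℤ, g = S.Δ ^ m := by
      intro g
      have hsub : {a : G | a ∈ S.P ∧ a⁻¹ * S.Δ ∈ S.P} ⊆
          ↑(Subgroup.zpowers S.Δ) := by
        intro a ha
        rcases hsimp2 a ha with h | h
        · rw [h]; exact Subgroup.one_mem _
        · rw [h]; exact Subgroup.mem_zpowers _
      have := S.simples_generate
      have hle : (⊤ : Subgroup G) ≤ Subgroup.zpowers S.Δ := by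
        rw [← this]; exact Subgroup.closure_le _ |>.2 hsub
      have hg : g ∈ Subgroup.zpowers S.Δ := hle trivial
      obtain ⟨m, hm⟩ := Subgroup.mem_zpowers_iff.1 hg
      exact ⟨m, hm.symm⟩
    have hcomm : ∀ g h : G, Commute g h := by
      intro g h
      obtain ⟨m, rfl⟩ := hzp g
      obtain ⟨m', rfl⟩ := hzp h
      exact Commute.zpow_zpow (Commute.refl S.Δ) m m'
    have hXsimpl : X = x₀ ^ k * y₀ ^ l := by
      rw [hXeq₀]
      have h1 : P₀⁻¹ * x₀ ^ k * P₀ = x₀ ^ k := by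
        have h2 := (hcomm (x₀ ^ k) P₀).eq
        rw [mul_assoc, h2, ← mul_assoc]
        simp
      rw [h1]
    have : n ≤ 0 := by
      apply hSSle 0 X 1 x₀ y₀ _ hax₀ hcx₀ hay₀ hcy₀ _ (IsConj.refl X)
      · rw [S.ell_one]
      · rw [hXsimpl]; group
    omega
  have hatomp : ∀ a : G, S.IsAtom' a → S.IsSimple a ∧ a ≠ S.Δ :=
    fun a ha => S.atom_proper hhom hΔ1 hnotΔ ha
  -- the witness predicate
  set Wit : G → G → G → Prop := fun Q x₂ y₂ => Q ∈ S.P ∧ S.ell Q ≤ n ∧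
    S.IsAtom' x₂ ∧ IsConj x x₂ ∧ S.IsAtom' y₂ ∧ IsConj y y₂ ∧
    X = Q⁻¹ * x₂ ^ k * Q * y₂ ^ l with hWitdef
  -- a positive witness exists
  have hWitNE : ∃ Q x₂ y₂, Wit Q x₂ y₂ := by
    set p := S.nfInf P₀ with hpdef
    set w := S.nfWord P₀ with hwdef
    have hP₀eq : P₀ = S.Δ ^ p * w.prod := S.nf_prod P₀
    set Q := w.prod with hQdef
    have hQP : Q ∈ S.P := S.prod_mem_P (fun b hb => (S.nf_factors P₀ b hb).1.1)
    have hQeq0 : Q = S.Δ ^ (0 : ℤ) * w.prod := by rw [zpow_zero, one_mul]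
    have hQell : S.ell Q = w.length := S.ell_eq (S.validWord_nf P₀) hQeq0
    have hrw : S.rho (-p) x₀ = S.Δ ^ (-p) * x₀ * (S.Δ ^ (-p))⁻¹ := by
      unfold GarsideStructureNF.rho
      rw [← zpow_neg, neg_neg]
    refine ⟨Q, S.rho (-p) x₀, y₀, hQP, ?_, S.rho_atom hft hΔ1 (-p) hax₀, ?_,
      hay₀, hcy₀, ?_⟩
    · rw [hQell]
      exact le_trans hP₀l (le_of_eq hndef.symm)
    · apply hcx₀.trans
      rw [isConj_iff]
      exact ⟨S.Δ ^ (-p), hrw.symm⟩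
    · have hrwpow : (S.rho (-p) x₀) ^ k = S.Δ ^ (-p) * x₀ ^ k * (S.Δ ^ (-p))⁻¹ := by
        rw [hrw, GarsideStructureNF.conj_pow_eq]
      rw [hXeq₀, hP₀eq, hrwpow]
      set XK := x₀ ^ k
      set YL := y₀ ^ l
      rw [← zpow_neg, neg_neg]
      group
  -- minimal-norm witness
  set NS : Set ℕ := {m | ∃ Q x₂ y₂, Wit Q x₂ y₂ ∧ S.norm Q = m} with hNSdef
  have hNSne : NS.Nonempty := by
    obtain ⟨Q, x₂, y₂, h⟩ := hWitNE
    exact ⟨S.norm Q, Q, x₂, y₂, h, rfl⟩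
  obtain ⟨Q, x₂, y₂, hwit, hnormQ⟩ := Nat.sInf_mem hNSne
  have hminN : ∀ Q' x' y', Wit Q' x' y' → sInf NS ≤ S.norm Q' := by
    intro Q' x' y' h
    exact Nat.sInf_le ⟨Q', x', y', h, rfl⟩
  obtain ⟨hQP, hQell, haxx, hcxx, hayy, hcyy, hXw⟩ := hwit
  have hx₂s : S.IsSimple x₂ := (hatomp x₂ haxx).1
  have hy₂s : S.IsSimple y₂ := (hatomp y₂ hayy).1
  -- Q ≠ 1
  have hQ1 : Q ≠ 1 := by
    intro h
    have : n ≤ 0 := by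
      apply hSSle 0 X 1 x₂ y₂ _ haxx hcxx hayy hcyy _ (IsConj.refl X)
      · rw [S.ell_one]
      · rw [hXw, h]
    omega
  -- inf Q = 0
  have hinfQ : S.nfInf Q = 0 := by
    have hge := S.nfInf_nonneg hΔ1 hQP
    by_contra hne
    have hp1 : 1 ≤ S.nfInf Q := by omega
    have hQeq := S.nf_prod Q
    set pq := S.nfInf Q with hpqdef
    clear_value pq
    set w := S.nfWord Q with hwdef
    have hwP : w.prod ∈ S.P := S.prod_mem_P (fun b hb => (S.nf_factors Q b hb).1.1)
    set Q' := S.Δ⁻¹ * Q with hQ'def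
    have hQ'eq : Q' = S.Δ ^ (pq - 1) * w.prod := by
      rw [hQ'def, hQeq, ← mul_assoc]
      congr 1
      rw [← zpow_neg_one, ← zpow_add]
      ring_nf
    have hQ'P : Q' ∈ S.P := by
      rw [hQ'eq]
      exact S.mul_mem (S.delta_zpow_mem (by omega)) hwP
    have hQ'ell : S.ell Q' = S.ell Q := S.ell_eq (S.validWord_nf Q) hQ'eq
    have hrw : S.rho (-1) x₂ = S.Δ⁻¹ * x₂ * (S.Δ⁻¹)⁻¹ := by
      unfold GarsideStructureNF.rho
      simp
    have hwit' : Wit Q' (S.rho (-1) x₂) y₂ := by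
      refine ⟨hQ'P, by rw [hQ'ell]; exact hQell, S.rho_atom hft hΔ1 (-1) haxx, ?_,
        hayy, hcyy, ?_⟩
      · exact hcxx.trans (isConj_iff.2 ⟨S.Δ⁻¹, hrw.symm⟩)
      · have hrwpow : (S.rho (-1) x₂) ^ k = S.Δ⁻¹ * x₂ ^ k * (S.Δ⁻¹)⁻¹ := by
          rw [hrw, GarsideStructureNF.conj_pow_eq]
        rw [hXw, hrwpow, hQ'def]
        set XK := x₂ ^ k
        set YL := y₂ ^ l
        group
    have hmin := hminN _ _ _ hwit'
    have hsplit : Q = S.Δ * Q' := by rw [hQ'def]; group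
    have hadd := hhom S.Δ S.Δ_mem Q' hQ'P
    rw [← hsplit] at hadd
    have hΔn := S.one_le_norm S.Δ_mem hΔ1
    omega
  set cs := S.nfWord Q with hcsdef
  have hQcs : Q = cs.prod := by
    have := S.nf_prod Q
    rwa [hinfQ, zpow_zero, one_mul] at this
  have hcs_fac : ∀ a ∈ cs, S.IsSimple a ∧ a ≠ 1 ∧ a ≠ S.Δ := S.nf_factors Q
  have hcs_chain : List.Chain' S.LeftWeighted cs := S.nf_chain Q
  have hcsne : cs ≠ [] := by
    intro h
    apply hQ1
    rw [hQcs, h, List.prod_nil]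
  set r := cs.length with hrdef
  have hr1 : 1 ≤ r := by
    rcases cs with _ | ⟨c, t⟩
    · exact absurd rfl hcsne
    · simp [hrdef]
  have hrn : r ≤ n := hQell
  have hC₀s : S.IsSimple (cs.head hcsne) :=
    (hcs_fac _ (List.head_mem hcsne)).1
  have htailP : cs.tail.prod ∈ S.P :=
    S.prod_mem_P (fun b hb => (hcs_fac b (List.tail_subset cs hb)).1.1)
  have hheadtail : cs.head hcsne * cs.tail.prod = Q := by
    rw [hQcs]
    conv_rhs => rw [← List.cons_head_tail hcsne]
    rw [List.prod_cons]
  have htailfac : ∀ b ∈ cs.tail, S.IsSimple b :=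
    fun b hb => (hcs_fac b (List.tail_subset cs hb)).1
  have htaillen : cs.tail.length = r - 1 := by
    rw [hrdef, List.length_tail]
  -- (b) : x₂ ∧ C₀ = 1
  have hb : S.wedge x₂ (cs.head hcsne) = 1 := by
    by_contra hbne
    set t := S.wedge x₂ (cs.head hcsne) with htdef
    have htx : S.le t x₂ := S.wedge_le_left' _ _
    have htc : S.le t (cs.head hcsne) := S.wedge_le_right' _ _
    have htP : t ∈ S.P := (S.one_le_iff).1
      (S.le_wedge' (S.le_one_of_mem haxx.1) (S.le_one_of_mem hC₀s.1))
    rcases S.atom_le haxx htP htx with h1 | h1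
    · exact hbne h1
    have hx₂C : S.le x₂ (cs.head hcsne) := h1 ▸ htc
    have hx₂Q : S.le x₂ Q := by
      apply S.le_trans' hx₂C
      rw [← hheadtail]
      exact S.le_mul_right _ htailP
    set Q' := x₂⁻¹ * Q with hQ'def
    have hQ'P : Q' ∈ S.P := hx₂Q
    have hXeq' : X = Q'⁻¹ * x₂ ^ k * Q' * y₂ ^ l := by
      rw [hXw, hQ'def]
      congr 1
      have h2 := GarsideStructureNF.conj_witness_eq Q x₂ x₂ k
      have h3 : x₂⁻¹ * x₂ * x₂ = x₂ := by group
      rw [h3] at h2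
      exact h2.symm
    have hs1P : x₂⁻¹ * cs.head hcsne ∈ S.P := hx₂C
    have hs1Δ : S.le (x₂⁻¹ * cs.head hcsne) S.Δ := by
      apply S.le_trans' _ (S.dl_le_delta hx₂s)
      have := S.le_mul_left x₂⁻¹ hC₀s.2
      exact this
    have hell' : S.ell Q' ≤ n := by
      apply le_trans _ hrn
      have hlen : ((x₂⁻¹ * cs.head hcsne) :: cs.tail).length = r := by
        rw [List.length_cons, htaillen]; omega
      rw [← hlen]
      apply S.ell_le_of_simples hhom hΔ1
      · intro s hs
        rcases List.mem_cons.1 hs with h | h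
        · subst h; exact ⟨hs1P, hs1Δ⟩
        · exact htailfac s h
      · rw [List.prod_cons, mul_assoc, hheadtail, hQ'def]
    have hmin := hminN _ _ _ ⟨hQ'P, hell', haxx, hcxx, hayy, hcyy, hXeq'⟩
    have hsplit : Q = x₂ * Q' := by rw [hQ'def]; group
    have hadd := hhom x₂ haxx.1 Q' hQ'P
    rw [← hsplit] at hadd
    have h1n := S.one_le_norm haxx.1 haxx.2.1
    omega
  -- (d) : C₀ ∧ ∂x₂ = 1
  have hd : S.wedge (cs.head hcsne) (S.dl x₂) = 1 := by
    by_contra hdne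
    set t := S.wedge (cs.head hcsne) (S.dl x₂) with htdef
    have htc : S.le t (cs.head hcsne) := S.wedge_le_left' _ _
    have htd : S.le t (S.dl x₂) := S.wedge_le_right' _ _
    have htP : t ∈ S.P := (S.one_le_iff).1
      (S.le_wedge' (S.le_one_of_mem hC₀s.1) (S.le_one_of_mem (S.dl_mem hx₂s)))
    have hts : S.IsSimple t := ⟨htP, S.le_trans' htc hC₀s.2⟩
    have hx₂t : S.le (x₂ * t) S.Δ := (S.le_dl_iff).1 htd
    have hx₂ts : S.IsSimple (x₂ * t) := ⟨S.mul_mem haxx.1 htP, hx₂t⟩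
    -- t ≼ x₂·t by symmetry
    have hges : S.ges (x₂ * t) t := by
      unfold GarsideStructure.ges
      have : x₂ * t * t⁻¹ = x₂ := by group
      rw [this]; exact haxx.1
    have htle : S.le t (x₂ * t) := (hsym t (x₂ * t) hts hx₂ts).2 hges
    set x₃ := t⁻¹ * x₂ * t with hx₃def
    have hx₃P : x₃ ∈ S.P := by
      have : t⁻¹ * (x₂ * t) ∈ S.P := htle
      rwa [← mul_assoc] at this
    have hx₃norm : S.norm x₃ = 1 := by
      have h1 := hhom x₂ haxx.1 t htP
      have h2 := hhom t htP x₃ hx₃P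
      have h3 : t * x₃ = x₂ * t := by rw [hx₃def]; group
      rw [h3] at h2
      have h4 := S.norm_atom haxx
      omega
    have hx₃atom : S.IsAtom' x₃ := S.atom_of_norm_one hhom hx₃P hx₃norm
    have hcx₃ : IsConj x x₃ := by
      apply hcxx.trans
      rw [isConj_iff]
      refine ⟨t⁻¹, ?_⟩
      rw [hx₃def]; group
    set Q' := t⁻¹ * Q with hQ'def
    have htQ : S.le t Q := by
      apply S.le_trans' htc
      rw [← hheadtail]
      exact S.le_mul_right _ htailP
    have hQ'P : Q' ∈ S.P := htQ
    have hXeq' : X = Q'⁻¹ * x₃ ^ k * Q' * y₂ ^ l := by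
      rw [hXw, hQ'def, hx₃def]
      congr 1
      exact (GarsideStructureNF.conj_witness_eq Q t x₂ k).symm
    have hs1P : t⁻¹ * cs.head hcsne ∈ S.P := htc
    have hs1Δ : S.le (t⁻¹ * cs.head hcsne) S.Δ := by
      apply S.le_trans' _ (S.dl_le_delta hts)
      exact S.le_mul_left t⁻¹ hC₀s.2
    have hell' : S.ell Q' ≤ n := by
      apply le_trans _ hrn
      have hlen : ((t⁻¹ * cs.head hcsne) :: cs.tail).length = r := by
        rw [List.length_cons, htaillen]; omega
      rw [← hlen]
      apply S.ell_le_of_simples hhom hΔ1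
      · intro s hs
        rcases List.mem_cons.1 hs with h | h
        · subst h; exact ⟨hs1P, hs1Δ⟩
        · exact htailfac s h
      · rw [List.prod_cons, mul_assoc, hheadtail, hQ'def]
    have hmin := hminN _ _ _ ⟨hQ'P, hell', hx₃atom, hcx₃, hayy, hcyy, hXeq'⟩
    have hsplit : Q = t * Q' := by rw [hQ'def]; group
    have hadd := hhom t htP Q' hQ'P
    rw [← hsplit] at hadd
    have h1n := S.one_le_norm htP hdne
    omega
  -- (f) : y₂ ∧ ∂C_last = 1
  have hCrs : S.IsSimple (cs.getLast hcsne) :=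
    (hcs_fac _ (List.getLast_mem hcsne)).1
  have hf : S.wedge y₂ (S.dl (cs.getLast hcsne)) = 1 := by
    by_contra hfne
    set Cr := cs.getLast hcsne with hCrdef
    set t := S.wedge y₂ (S.dl Cr) with htdef
    have hty : S.le t y₂ := S.wedge_le_left' _ _
    have htd : S.le t (S.dl Cr) := S.wedge_le_right' _ _
    have htP : t ∈ S.P := (S.one_le_iff).1
      (S.le_wedge' (S.le_one_of_mem hayy.1) (S.le_one_of_mem (S.dl_mem hCrs)))
    rcases S.atom_le hayy htP hty with h1 | h1
    · exact hfne h1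
    have hyd : S.le y₂ (S.dl Cr) := h1 ▸ htd
    have hCy : S.le (Cr * y₂) S.Δ := (S.le_dl_iff).1 hyd
    have hCys : S.IsSimple (Cr * y₂) := ⟨S.mul_mem hCrs.1 hayy.1, hCy⟩
    have hle1 : S.le Cr (Cr * y₂) := S.le_mul_right (a := y₂) Cr hayy.1
    have hges : S.ges (Cr * y₂) Cr := (hsym Cr (Cr * y₂) hCrs hCys).1 hle1
    set y₃ := Cr * y₂ * Cr⁻¹ with hy₃def
    have hy₃P : y₃ ∈ S.P := hges
    have hy₃norm : S.norm y₃ = 1 := by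
      have h1 := hhom Cr hCrs.1 y₂ hayy.1
      have h2 := hhom y₃ hy₃P Cr hCrs.1
      have h3 : y₃ * Cr = Cr * y₂ := by rw [hy₃def]; group
      rw [h3] at h2
      have h4 := S.norm_atom hayy
      omega
    have hy₃atom : S.IsAtom' y₃ := S.atom_of_norm_one hhom hy₃P hy₃norm
    have hcy₃ : IsConj y y₃ := by
      apply hcyy.trans
      rw [isConj_iff]
      exact ⟨Cr, rfl⟩
    set P₁ := cs.dropLast.prod with hP₁def
    have hQsplit : Q = P₁ * Cr := by
      rw [hQcs, hP₁def]
      conv_lhs => rw [← List.dropLast_append_getLast hcsne]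
      rw [List.prod_append, List.prod_singleton]
    set Z := Cr * X * Cr⁻¹ with hZdef
    have hconjZ : IsConj X Z := isConj_iff.2 ⟨Cr, rfl⟩
    have hZeq : Z = P₁⁻¹ * x₂ ^ k * P₁ * y₃ ^ l := by
      have hy₃pow : y₃ ^ l = Cr * y₂ ^ l * Cr⁻¹ := by
        rw [hy₃def, GarsideStructureNF.conj_pow_eq]
      rw [hZdef, hXw, hQsplit, hy₃pow]
      set XK := x₂ ^ k
      set YL := y₂ ^ l
      group
    have hvalid : S.ValidWord cs.dropLast := by
      constructor
      · intro a ha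
        exact hcs_fac a (List.dropLast_subset cs ha)
      · exact hcs_chain.prefix (List.dropLast_prefix cs)
    have hP₁eq : P₁ = S.Δ ^ (0 : ℤ) * cs.dropLast.prod := by
      rw [zpow_zero, one_mul]
    have hP₁ell : S.ell P₁ ≤ r - 1 := by
      rw [S.ell_eq hvalid hP₁eq, List.length_dropLast]
    have hcontra := hSSle (r - 1) Z P₁ x₂ y₃ hP₁ell haxx hcxx hy₃atom hcy₃ hZeq
      hconjZ
    omega
  -- square-free consequences
  have hsquare : ∀ z : G, S.IsAtom' z → 2 ≤ max k l → S.wedge z (S.dl z) = 1 := by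
    intro z hz hmax
    by_contra hne
    have hzs : S.IsSimple z := (hatomp z hz).1
    have htz : S.le (S.wedge z (S.dl z)) z := S.wedge_le_left' _ _
    have htd : S.le (S.wedge z (S.dl z)) (S.dl z) := S.wedge_le_right' _ _
    have htP : S.wedge z (S.dl z) ∈ S.P := (S.one_le_iff).1
      (S.le_wedge' (S.le_one_of_mem hz.1) (S.le_one_of_mem (S.dl_mem hzs)))
    rcases S.atom_le hz htP htz with h1 | h1
    · exact hne h1
    have hzd : S.le z (S.dl z) := by rwa [h1] at htd
    have hzz : S.le (z * z) S.Δ := (S.le_dl_iff).1 hzd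
    apply hsf hmax S.Δ S.simple_delta
    refine ⟨1, z, (z * z)⁻¹ * S.Δ, S.one_mem, hz, hzz, ?_⟩
    rw [pow_two]
    group
  have hcx2 : 2 ≤ k → S.LeftWeighted x₂ x₂ := by
    intro hk2
    rw [S.leftWeighted_iff hx₂s hx₂s.1]
    exact hsquare x₂ haxx (le_trans hk2 (le_max_left k l))
  have hcy2 : 2 ≤ l → S.LeftWeighted y₂ y₂ := by
    intro hl2
    rw [S.leftWeighted_iff hy₂s hy₂s.1]
    exact hsquare y₂ hayy (le_trans hl2 (le_max_right k l))
  -- ============ final assembly ============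
  set f := S.aword cs with hfdef
  have hCi : ∀ i, i < r → (S.IsSimple (cs.getD i 1) ∧ cs.getD i 1 ≠ 1 ∧
      cs.getD i 1 ≠ S.Δ) := by
    intro i hi
    have h0 : cs.getD i 1 = cs.get ⟨i, hi⟩ := by
      rw [List.getD_eq_getElem cs 1 hi]
      simp
    rw [h0]
    exact hcs_fac _ (List.get_mem cs _)
  have hfi_eq : ∀ i : ℕ, f i = S.rho ((i : ℤ) + 1) (S.dl (cs.getD i 1)) := by
    intro i
    rw [hfdef]
    unfold GarsideStructureNF.aword GarsideStructureNF.rho GarsideStructure.dl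
    group
  have hfi_simple : ∀ i, i < r → S.IsSimple (f i) := by
    intro i hi
    rw [hfi_eq]
    exact S.rho_simple hft hΔ1 _ (S.dl_simple (hCi i hi).1)
  have hfi_ne1 : ∀ i, i < r → f i ≠ 1 := by
    intro i hi h
    rw [hfi_eq] at h
    have h2 : S.rho ((i : ℤ) + 1) (S.dl (cs.getD i 1))
        = S.rho ((i : ℤ) + 1) 1 := by rw [h, S.rho_one_elt]
    have := S.rho_injective _ h2
    exact (hCi i hi).2.2 ((S.dl_eq_one_iff).1 this)
  have hfi_neΔ : ∀ i, i < r → f i ≠ S.Δ := by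
    intro i hi h
    rw [hfi_eq] at h
    have h2 : S.rho ((i : ℤ) + 1) (S.dl (cs.getD i 1))
        = S.rho ((i : ℤ) + 1) S.Δ := by rw [h, S.rho_delta]
    have := S.rho_injective _ h2
    exact (hCi i hi).2.1 ((S.dl_eq_delta_iff).1 this)
  have hdlfi : ∀ i : ℕ, S.dl (f i) = S.rho (i : ℤ) (cs.getD i 1) := by
    intro i
    rw [hfi_eq, S.rho_dl, S.dl_dl, S.rho_rho]
    norm_num
  have hcs_pairs : ∀ j, j + 1 < r →
      S.wedge (cs.getD (j + 1) 1) (S.dl (cs.getD j 1)) = 1 := by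
    intro j hj
    have hj' : j < r := by omega
    have hLW := List.isChain_iff_getElem.1 hcs_chain j (by omega)
    have h1 : cs.getD j 1 = cs.get ⟨j, hj'⟩ := by
      rw [List.getD_eq_getElem cs 1 hj']; simp
    have h2 : cs.getD (j + 1) 1 = cs.get ⟨j + 1, hj⟩ := by
      rw [List.getD_eq_getElem cs 1 hj]; simp
    rw [h1, h2]
    exact (S.leftWeighted_iff (hcs_fac _ (List.get_mem cs _)).1
      (hcs_fac _ (List.get_mem cs _)).1.1).1 hLW
  have hfLW : ∀ j, j + 1 < r → S.LeftWeighted (f (j + 1)) (f j) := by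
    intro j hj
    rw [S.leftWeighted_iff (hfi_simple (j + 1) hj) (hfi_simple j (by omega)).1]
    rw [hfi_eq j, hdlfi (j + 1)]
    have hcast : ((j : ℤ) + 1) = ((j + 1 : ℕ) : ℤ) := by push_cast; ring
    rw [← hcast, ← S.rho_wedge hft hΔ1, S.wedge_comm, hcs_pairs j hj,
      S.rho_one_elt]
  have hgd0 : cs.getD 0 1 = cs.head hcsne := by
    conv_lhs => rw [← List.cons_head_tail hcsne]
    rw [List.getD_cons_zero]
  -- word pieces
  set arev := ((List.range r).map f).reverse with harevdef
  set repx := List.replicate k x₂ with hrepxdef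
  set repy := List.replicate l y₂ with hrepydef
  set W := arev ++ (repx ++ (cs ++ repy)) with hWdef
  have harevprod : arev.prod = S.Δ ^ (r : ℤ) * Q⁻¹ := by
    rw [harevdef, hfdef, S.aword_prod cs r le_rfl, List.take_length, ← hQcs]
  have hXWeq : X = S.Δ ^ (-(r : ℤ)) * W.prod := by
    rw [hWdef]
    simp only [List.prod_append]
    rw [harevprod, hrepxdef, hrepydef, List.prod_replicate, List.prod_replicate,
      ← hQcs, hXw]
    set XK := x₂ ^ k
    set YL := y₂ ^ l
    group
  have hWfac : ∀ a ∈ W, S.IsSimple a ∧ a ≠ 1 ∧ a ≠ S.Δ := by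
    intro a ha
    rw [hWdef] at ha
    simp only [List.mem_append] at ha
    rcases ha with h | h | h | h
    · rw [harevdef, List.mem_reverse, List.mem_map] at h
      obtain ⟨i, hi, rfl⟩ := h
      rw [List.mem_range] at hi
      exact ⟨hfi_simple i hi, hfi_ne1 i hi, hfi_neΔ i hi⟩
    · rw [hrepxdef] at h
      rw [List.eq_of_mem_replicate h]
      exact ⟨hx₂s, haxx.2.1, (hatomp x₂ haxx).2⟩
    · exact hcs_fac a h
    · rw [hrepydef] at h
      rw [List.eq_of_mem_replicate h]
      exact ⟨hy₂s, hayy.2.1, (hatomp y₂ hayy).2⟩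
  -- chains of the pieces
  have hchainrep : ∀ (z : G) (m : ℕ), (2 ≤ m → S.LeftWeighted z z) →
      List.Chain' S.LeftWeighted (List.replicate m z) := by
    intro z m hz
    rcases Nat.lt_or_ge m 2 with h | h
    · interval_cases m <;> simp [List.Chain']
    · exact GarsideStructureNF.chain'_replicate_of (hz h) m
  have hchainA : List.Chain' S.LeftWeighted arev := by
    rw [harevdef, List.Chain', List.isChain_reverse, List.isChain_map, List.isChain_iff_getElem]
    intro i hi
    rw [List.getElem_range, List.getElem_range]
    have hi' : i + 1 < r := by
      have := List.length_range (n := r)  -- (range r).length = r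
      omega
    exact hfLW i hi'
  -- head/last computations
  obtain ⟨r', hr'⟩ : ∃ r', r = r' + 1 := ⟨r - 1, by omega⟩
  obtain ⟨k', hk'⟩ : ∃ k', k = k' + 1 := ⟨k - 1, by omega⟩
  obtain ⟨l', hl'⟩ : ∃ l', l = l' + 1 := ⟨l - 1, by omega⟩
  have hlastA : arev.getLast? = some (f 0) := by
    rw [harevdef, hr', List.range_succ_eq_map, List.map_cons, List.reverse_cons,
      List.getLast?_concat]
  have hheadx : repx.head? = some x₂ := by
    rw [hrepxdef, hk', List.replicate_succ, List.head?_cons]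
  have hlastx : repx.getLast? = some x₂ := by
    rw [hrepxdef, hk', List.replicate_succ', List.getLast?_concat]
  have hheady : repy.head? = some y₂ := by
    rw [hrepydef, hl', List.replicate_succ, List.head?_cons]
  have hlastcs : cs.getLast? = some (cs.getLast hcsne) :=
    List.getLast?_eq_getLast hcsne
  have hheadcs : cs.head? = some (cs.head hcsne) := List.head?_eq_head hcsne
  -- the three juncture left-weightings
  have hjAx : S.LeftWeighted (f 0) x₂ := by
    rw [S.leftWeighted_iff (hfi_simple 0 (by omega)) haxx.1, hdlfi 0]
    have h0 : ((0 : ℕ) : ℤ) = 0 := rfl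
    rw [h0, S.rho_zero, hgd0]
    exact hb
  have hjxc : S.LeftWeighted x₂ (cs.head hcsne) := by
    rw [S.leftWeighted_iff hx₂s hC₀s.1]
    exact hd
  have hjcy : S.LeftWeighted (cs.getLast hcsne) y₂ := by
    rw [S.leftWeighted_iff hCrs hayy.1]
    exact hf
  -- assemble the chain
  have hWchain : List.Chain' S.LeftWeighted W := by
    rw [hWdef, List.Chain', List.isChain_append]
    refine ⟨hchainA, ?_, ?_⟩
    · rw [List.isChain_append]
      refine ⟨hchainrep x₂ k hcx2, ?_, ?_⟩
      · rw [List.isChain_append]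
        refine ⟨hcs_chain, hchainrep y₂ l hcy2, ?_⟩
        intro a ha b hb
        rw [hlastcs] at ha
        rw [hheady] at hb
        simp only [Option.mem_def, Option.some.injEq] at ha hb
        subst ha; subst hb
        exact hjcy
      · intro a ha b hb
        rw [hlastx] at ha
        have hhead2 : (cs ++ repy).head? = some (cs.head hcsne) := by
          conv_lhs => rw [← List.cons_head_tail hcsne]
          rw [List.cons_append, List.head?_cons]
        rw [hhead2] at hb
        simp only [Option.mem_def, Option.some.injEq] at ha hb
        subst ha; subst hb
        exact hjxc
    · intro a ha b hb
      rw [hlastA] at ha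
      have hhead3 : (repx ++ (cs ++ repy)).head? = some x₂ := by
        rw [hrepxdef, hk', List.replicate_succ, List.cons_append, List.head?_cons]
      rw [hhead3] at hb
      simp only [Option.mem_def, Option.some.injEq] at ha hb
      subst ha; subst hb
      exact hjAx
  -- normal form of X
  obtain ⟨hinfX, hwordX⟩ := S.nf_spec ⟨hWfac, hWchain⟩ hXWeq
  -- r = n
  have hellQr : S.ell Q ≤ r := by
    unfold GarsideStructureNF.ell
    rw [← hcsdef]
  have hnr : n ≤ r := hSSle r X Q x₂ y₂ hellQr haxx hcxx hayy hcyy hXw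
    (IsConj.refl X)
  have hreq : r = n := le_antisymm hrn hnr
  -- conclusion
  refine ⟨x₂, y₂, fun i : Fin n => f (i : ℕ), fun i : Fin n => cs.getD (i : ℕ) 1,
    haxx, hcxx, hayy, hcyy, ?_, ?_, ?_, ?_⟩
  · intro i
    have hi : (i : ℕ) < r := by rw [hreq]; exact i.isLt
    exact ⟨hfi_simple _ hi, (hCi _ hi).1⟩
  · intro i
    show f (i : ℕ) * S.Δ ^ (i : ℕ) * cs.getD (i : ℕ) 1 = S.Δ ^ ((i : ℕ) + 1)
    rw [hfdef]
    unfold GarsideStructureNF.aword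
    rw [← zpow_natCast S.Δ ((i : ℕ) + 1), ← zpow_natCast S.Δ (i : ℕ)]
    push_cast
    group
  · rw [hinfX, hreq]
  · rw [hwordX, hWdef]
    have hofA : List.ofFn (fun i : Fin n => f (i : ℕ)) = (List.range r).map f := by
      apply List.ext_getElem
      · simp [hreq]
      · intro i h1 h2
        simp
    have hofB : List.ofFn (fun i : Fin n => cs.getD (i : ℕ) 1) = cs := by
      apply List.ext_getElem
      · simp [← hreq, hrdef]
      · intro i h1 h2
        simp only [List.getElem_ofFn]
        rw [List.getD_eq_getElem cs 1 h2]
    rw [hofA, hofB, harevdef]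
    simp [List.append_assoc, hrepxdef, hrepydef]
end
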